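/- arXiv:1804.01413 — 5 statements merged into one kernel-verified Lean document; each statement's English description precedes it below -/
import Mathlib

section
/- Every element of the fundamental group of the circle is an integer power of the class of the standard loop: for every g ∈ π₁(S¹, 1) there exists n ∈ ℤ with g = [loop]^n; equivalently, π₁(S¹, 1) is generated by the homotopy class of the loop t ↦ exp(2πit). -/
attribute [local instance] Path.Homotopic.setoid

/-- The standard loop in the circle based at `1`, given by `t ↦ exp (2 π i t)`. -/
noncomputable def circleLoop : Path (1 : Circle) 1 where
  toFun t := Circle.exp (2 * Real.pi * t)
  continuous_toFun := Circle.exp.continuous.comp (continuous_const.mul continuous_subtype_val)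
  source' := by simp
  target' := by simp

/-- The homotopy class of the standard loop, as an element of the fundamental group of
the circle. -/
noncomputable def circleLoopClass : FundamentalGroup Circle 1 :=
  FundamentalGroup.fromPath (X := TopCat.of Circle) ⟦circleLoop⟧

/- key homotopy lemma -/
lemma homotopic_of_lifts {γ₁ γ₂ : Path (1 : Circle) 1} {f g : unitInterval → ℝ}
    (hf : Continuous f) (hg : Continuous g) (h0 : f 0 = g 0) (h1 : f 1 = g 1)
    (e1 : ∀ t, γ₁ t = Circle.exp (f t)) (e2 : ∀ t, γ₂ t = Circle.exp (g t)) :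
    γ₁.Homotopic γ₂ := by
  refine ⟨{ toFun := fun p => Circle.exp ((1 - (p.1 : ℝ)) * f p.2 + (p.1 : ℝ) * g p.2)
            continuous_toFun := ?_
            map_zero_left := ?_
            map_one_left := ?_
            prop' := ?_ }⟩
  · exact Circle.exp.continuous.comp (by fun_prop)
  · intro x; simp [e1 x]
  · intro x; simp [e2 x]
  · intro s x hx
    rcases hx with hx | hx
    · subst hx
      rw [Path.coe_toContinuousMap, e1 0]
      exact congrArg Circle.exp (by rw [h0]; ring)
    · simp only [Set.mem_singleton_iff] at hx
      subst hx
      rw [Path.coe_toContinuousMap, e1 1]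
      exact congrArg Circle.exp (by rw [h1]; ring)

lemma circle_exp_sum (n : ℕ) (f : ℕ → ℝ) :
    Circle.exp (∑ j ∈ Finset.range n, f j) = ∏ j ∈ Finset.range n, Circle.exp (f j) := by
  induction n with
  | zero => simp
  | succ n ih => rw [Finset.sum_range_succ, Finset.prod_range_succ, Circle.exp_add, ih]

lemma div_mem_slitPlane_of_dist_lt {z w : Circle} (h : dist z w < 1) :
    ((z / w : Circle) : ℂ) ∈ Complex.slitPlane := by
  rw [Complex.mem_slitPlane_iff]
  left
  have hd : ‖(z : ℂ) - w‖ < 1 := by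
    rw [← Complex.dist_eq]; exact h
  have habs : ‖((z / w : Circle) : ℂ) - 1‖ < 1 := by
    rw [Circle.coe_div]
    have hw : (w : ℂ) ≠ 0 := Circle.coe_ne_zero w
    have : (z : ℂ) / w - 1 = ((z : ℂ) - w) / w := by field_simp
    rw [this, norm_div, Circle.norm_coe, div_one]
    exact hd
  set q : ℂ := ((z / w : Circle) : ℂ) with hq
  have h1 : Complex.normSq q = 1 := Circle.normSq_coe _
  have h2 : Complex.normSq (q - 1) < 1 := by
    have hsq := Complex.sq_norm (q - 1)
    nlinarith [norm_nonneg (q - 1)]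
  rw [Complex.normSq_apply] at h1
  rw [Complex.normSq_apply, Complex.sub_re, Complex.sub_im, Complex.one_re, Complex.one_im] at h2
  nlinarith

lemma exists_lift (γ : Path (1 : Circle) 1) :
    ∃ f : unitInterval → ℝ, Continuous f ∧ f 0 = 0 ∧ ∀ t, γ t = Circle.exp (f t) := by
  have hγu : UniformContinuous γ := CompactSpace.uniformContinuous_of_continuous γ.continuous
  obtain ⟨δ, hδ0, hδ⟩ := Metric.uniformContinuous_iff.mp hγu 1 one_pos
  obtain ⟨N, hN⟩ := exists_nat_one_div_lt hδ0
  set M : ℕ := N + 1 with hM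
  have hM0 : (0 : ℝ) < M := by positivity
  have hMδ : 1 / (M : ℝ) < δ := by
    have : ((M : ℝ)) = (N : ℝ) + 1 := by push_cast [hM]; ring
    rwa [this]
  -- the subdivision points
  set w : ℕ → unitInterval → unitInterval := fun j t =>
    Set.projIcc 0 1 zero_le_one (min (t : ℝ) (j / M)) with hw
  have hwcoe : ∀ (j : ℕ) (t : unitInterval), ((w j t : ℝ)) = min (t : ℝ) (j / M) := by
    intro j t
    have hmem : min (t : ℝ) (j / M) ∈ Set.Icc (0 : ℝ) 1 := by
      constructor
      · exact le_min t.2.1 (by positivity)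
      · exact min_le_of_left_le t.2.2
    simp only [hw]
    exact congrArg Subtype.val (Set.projIcc_of_mem _ hmem)
  have hmin : ∀ (a x y : ℝ), x ≤ y → |min a y - min a x| ≤ y - x := by
    intro a x y hxy
    rcases le_total a x with h | h
    · rw [min_eq_left h, min_eq_left (h.trans hxy)]; simpa using hxy
    · rcases le_total a y with h2 | h2
      · rw [min_eq_left h2, min_eq_right h]
        rw [abs_of_nonneg (sub_nonneg.2 h)]; linarith
      · rw [min_eq_right h2, min_eq_right h, abs_of_nonneg (sub_nonneg.2 hxy)]
  have hclose : ∀ (j : ℕ) (t : unitInterval), dist (γ (w (j + 1) t)) (γ (w j t)) < 1 := by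
    intro j t
    apply hδ
    rw [Subtype.dist_eq, Real.dist_eq, hwcoe, hwcoe]
    have hb : |min (t : ℝ) ((j + 1 : ℕ) / M) - min (t : ℝ) (j / M)| ≤ 1 / M := by
      have h1 : ((j : ℝ)) / M ≤ ((j + 1 : ℕ) : ℝ) / M := by
        gcongr
        exact le_add_of_nonneg_right zero_le_one
      have := hmin (t : ℝ) ((j : ℝ) / M) (((j + 1 : ℕ) : ℝ) / M) h1
      have he : ((j + 1 : ℕ) : ℝ) / M - (j : ℝ) / M = 1 / M := by push_cast; ring
      rwa [he] at this
    exact lt_of_le_of_lt hb hMδ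
  -- the lift
  refine ⟨fun t => ∑ j ∈ Finset.range M, Complex.arg ((γ (w (j + 1) t) / γ (w j t) : Circle)),
    ?_, ?_, ?_⟩
  · -- continuity
    apply continuous_finset_sum
    intro j _
    rw [continuous_iff_continuousAt]
    intro t
    have hA : Continuous fun t => ((γ (w (j + 1) t) / γ (w j t) : Circle) : ℂ) := by
      have hwc : ∀ k : ℕ, Continuous (w k) := by
        intro k
        exact continuous_projIcc.comp (continuous_subtype_val.min continuous_const)
      exact continuous_subtype_val.comp
        (((γ.continuous.comp (hwc (j + 1))).div' (γ.continuous.comp (hwc j))))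
    exact ContinuousAt.comp (x := t)
      (f := fun t => ((γ (w (j + 1) t) / γ (w j t) : Circle) : ℂ))
      (Complex.continuousAt_arg (div_mem_slitPlane_of_dist_lt (hclose j t))) hA.continuousAt
  · -- value at 0
    apply Finset.sum_eq_zero
    intro j _
    have hz : ∀ k : ℕ, w k 0 = 0 := by
      intro k
      apply Subtype.ext
      rw [hwcoe]
      simp
      positivity
    rw [hz, hz]
    simp [γ.source]
  · -- exp of the lift
    intro t
    rw [circle_exp_sum]
    have hterm : ∀ j ∈ Finset.range M,
        Circle.exp (Complex.arg ((γ (w (j + 1) t) / γ (w j t) : Circle)))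
          = γ (w (j + 1) t) / γ (w j t) := by
      intro j _
      exact Circle.exp_arg _
    rw [Finset.prod_congr rfl hterm, Finset.prod_range_div (fun j => γ (w j t))]
    have hN' : w M t = t := by
      apply Subtype.ext
      rw [hwcoe]
      have : ((M : ℝ)) / M = 1 := div_self (ne_of_gt hM0)
      rw [this]
      exact min_eq_left t.2.2
    have h0' : w 0 t = 0 := by
      apply Subtype.ext
      rw [hwcoe]
      simp
      exact t.2.1
    rw [hN', h0', γ.source, div_one]

noncomputable def expPath (n : ℤ) : Path (1 : Circle) 1 where
  toFun t := Circle.exp (2 * Real.pi * n * t)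
  continuous_toFun := Circle.exp.continuous.comp (continuous_const.mul continuous_subtype_val)
  source' := by simp
  target' := by simp [Circle.exp_two_pi_mul_int]

lemma homotopic_expPath (γ : Path (1 : Circle) 1) : ∃ n : ℤ, γ.Homotopic (expPath n) := by
  obtain ⟨f, hf, hf0, hfe⟩ := exists_lift γ
  have h1 : Circle.exp (f 1) = 1 := by rw [← hfe]; exact γ.target
  obtain ⟨n, hn⟩ := Circle.exp_eq_one.mp h1
  refine ⟨n, homotopic_of_lifts hf ?_ ?_ ?_ hfe (fun t => rfl)⟩
  · exact (continuous_const.mul continuous_subtype_val)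
  · simp [hf0]
  · rw [hn]; push_cast; ring

lemma quot_eq_of_homotopic {x y : Circle} {p q : Path x y} (h : p.Homotopic q) :
    (⟦p⟧ : Path.Homotopic.Quotient x y) = ⟦q⟧ := Quotient.sound h

noncomputable abbrev E (n : ℤ) : FundamentalGroup Circle 1 :=
  FundamentalGroup.fromPath (X := TopCat.of Circle) ⟦expPath n⟧

lemma fromPath_mul {X : TopCat} {x : X} (p q : Path x x) :
    (FundamentalGroup.fromPath (X := X) ⟦p⟧) * FundamentalGroup.fromPath (X := X) ⟦q⟧ =
      FundamentalGroup.fromPath (X := X) ⟦q.trans p⟧ := by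
  rfl

lemma trans_expPath (a b : ℤ) : ((expPath a).trans (expPath b)).Homotopic (expPath (a + b)) := by
  refine homotopic_of_lifts (f := fun t => if (t : ℝ) ≤ 1 / 2 then 2 * Real.pi * a * (2 * t)
      else 2 * Real.pi * a + 2 * Real.pi * b * (2 * t - 1))
    (g := fun t => 2 * Real.pi * (a + b : ℤ) * t) ?_ ?_ ?_ ?_ ?_ (fun t => rfl)
  · apply Continuous.if_le
    · fun_prop
    · fun_prop
    · exact continuous_subtype_val
    · exact continuous_const
    · intro t ht
      rw [ht]; ring
  · fun_prop
  · norm_num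
  · norm_num
    ring
  · intro t
    rw [Path.trans_apply]
    split_ifs with h
    · simp only [expPath, Path.coe_mk_mk]
    · simp only [expPath, Path.coe_mk_mk]
      rw [Circle.exp_add, Circle.exp_two_pi_mul_int, one_mul]

lemma E_mul (a b : ℤ) : E a * E b = E (a + b) := by
  refine (fromPath_mul (X := TopCat.of Circle) (expPath a) (expPath b)).trans ?_
  exact congrArg _ (quot_eq_of_homotopic (by rw [add_comm a b]; exact trans_expPath b a))

lemma cls_eq_E1 : circleLoopClass = E 1 := by
  unfold circleLoopClass
  refine congrArg _ (quot_eq_of_homotopic ?_)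
  refine homotopic_of_lifts (f := fun t => 2 * Real.pi * t)
    (g := fun t => 2 * Real.pi * (1 : ℤ) * t) ?_ ?_ ?_ ?_ (fun t => rfl) (fun t => rfl)
  · fun_prop
  · fun_prop
  · norm_num
  · norm_num

lemma E_zero : E 0 = 1 := by
  have h : (⟦expPath 0⟧ : Path.Homotopic.Quotient (1 : Circle) 1) = ⟦Path.refl 1⟧ := by
    refine quot_eq_of_homotopic (homotopic_of_lifts (f := fun _ => (0 : ℝ))
      (g := fun _ => (0 : ℝ)) continuous_const continuous_const rfl rfl ?_ ?_)
    · intro t; simp [expPath]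
    · intro t; simp
  show FundamentalGroup.fromPath (X := TopCat.of Circle) ⟦expPath 0⟧ = 1
  rw [h]
  exact (FundamentalGroupoid.id_eq_path_refl _).symm

lemma pow_eq_E (n : ℤ) : circleLoopClass ^ n = E n := by
  induction n using Int.induction_on with
  | zero => rw [zpow_zero]; exact E_zero.symm
  | succ k ih => rw [zpow_add_one, ih, cls_eq_E1, E_mul]
  | pred k ih =>
    rw [zpow_sub_one, ih, cls_eq_E1]
    have h := E_mul (-(k : ℤ) - 1) 1
    rw [show (-(k : ℤ) - 1 + 1) = -(k : ℤ) by ring] at h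
    exact (eq_mul_inv_of_mul_eq h).symm

/-- Every element of the fundamental group of the circle is an integer power of the class
of the standard loop `t ↦ exp (2 π i t)`. -/
theorem circle_fundamentalGroup_generated_by_loop
    (g : FundamentalGroup Circle 1) : ∃ n : ℤ, g = circleLoopClass ^ n := by
  obtain ⟨γ, hγ⟩ := Quotient.exists_rep (FundamentalGroup.toPath (X := TopCat.of Circle) g)
  obtain ⟨n, hn⟩ := homotopic_expPath γ
  refine ⟨n, ?_⟩
  rw [pow_eq_E]
  show FundamentalGroup.toPath (X := TopCat.of Circle) g = ⟦expPath n⟧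
  rw [← hγ]
  exact quot_eq_of_homotopic hn
end

section
/- Every element of the fundamental group of the torus is a product of integer powers of the classes of the two canonical loops: for every g ∈ π₁(S¹ × S¹, (1,1)) there exist n, m ∈ ℤ with g = [β]^n * [α]^m. -/
attribute [local instance] Path.Homotopic.setoid

/-- The loop `α` in the torus based at `(1, 1)`, given by `t ↦ (exp (2 π i t), 1)`. -/
noncomputable def torusLoopA : Path ((1 : Circle), (1 : Circle)) ((1 : Circle), (1 : Circle)) :=
  circleLoop.prod (Path.refl (1 : Circle))

/-- The loop `β` in the torus based at `(1, 1)`, given by `t ↦ (1, exp (2 π i t))`. -/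
noncomputable def torusLoopB : Path ((1 : Circle), (1 : Circle)) ((1 : Circle), (1 : Circle)) :=
  (Path.refl (1 : Circle)).prod circleLoop

/-- The homotopy class of `α` in the fundamental group of the torus. -/
noncomputable def torusClassA : FundamentalGroup (Circle × Circle) ((1 : Circle), (1 : Circle)) :=
  FundamentalGroup.fromPath (X := TopCat.of (Circle × Circle)) ⟦torusLoopA⟧

/-- The homotopy class of `β` in the fundamental group of the torus. -/
noncomputable def torusClassB : FundamentalGroup (Circle × Circle) ((1 : Circle), (1 : Circle)) :=
  FundamentalGroup.fromPath (X := TopCat.of (Circle × Circle)) ⟦torusLoopB⟧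

/-! ### Auxiliary development: the fundamental group of the circle is generated by `circleLoop` -/

open Real unitInterval CategoryTheory

noncomputable section TorusAux
namespace TorusAux

/-! #### Elementary facts about the circle -/

lemma exp_arg_coe (z : Circle) : Circle.exp (Complex.arg (z : ℂ)) = z := by
  ext
  rw [Circle.coe_exp]
  have := Complex.norm_mul_exp_arg_mul_I (z : ℂ)
  rw [Circle.norm_coe, Complex.ofReal_one, one_mul] at this
  exact this

lemma mem_slitPlane_of_ne_neg_one {z : Circle} (h : (z : ℂ) ≠ -1) :
    (z : ℂ) ∈ Complex.slitPlane := by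
  rw [Complex.mem_slitPlane_iff]
  by_contra hc
  push_neg at hc
  obtain ⟨h1, h2⟩ := hc
  have habs : ‖(z : ℂ)‖ = 1 := Circle.norm_coe z
  have hsq : (z : ℂ).re * (z : ℂ).re + (z : ℂ).im * (z : ℂ).im = 1 := by
    have := Complex.sq_norm (z : ℂ)
    rw [habs] at this
    rw [← Complex.normSq_apply]
    simpa using this
  have hre : (z : ℂ).re = -1 := by nlinarith
  exact h (Complex.ext hre (by simp [h2]))

lemma div_ne_neg_one {a b : Circle} (h : dist a b < 2) : ((a / b : Circle) : ℂ) ≠ -1 := by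
  intro hab
  rw [Circle.coe_div] at hab
  have hb : (b : ℂ) ≠ 0 := Circle.coe_ne_zero b
  have hanb : (a : ℂ) = -b := by
    field_simp at hab
    exact hab
  have hd : dist a b = 2 := by
    rw [show dist a b = dist (a : ℂ) (b : ℂ) from rfl, Complex.dist_eq, hanb]
    have : -(b : ℂ) - b = -(2 * b) := by ring
    rw [this]
    simp [Circle.norm_coe]
  linarith

/-! #### Straight-line homotopies between loops with matching lifts -/

lemma homotopic_of_lifts {x y : Circle} (p₀ p₁ : Path x y) (g₀ g₁ : I → ℝ)
    (hc₀ : Continuous g₀) (hc₁ : Continuous g₁)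
    (h0 : g₀ 0 = g₁ 0) (h1 : g₀ 1 = g₁ 1)
    (e₀ : ∀ t, p₀ t = Circle.exp (g₀ t)) (e₁ : ∀ t, p₁ t = Circle.exp (g₁ t)) :
    p₀.Homotopic p₁ := by
  refine ⟨⟨⟨⟨fun q => Circle.exp ((1 - (q.1 : ℝ)) * g₀ q.2 + (q.1 : ℝ) * g₁ q.2), ?_⟩,
      ?_, ?_⟩, ?_⟩⟩
  · exact Circle.exp.continuous.comp
      (((continuous_const.sub (continuous_induced_dom.comp continuous_fst)).mul
          (hc₀.comp continuous_snd)).add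
        ((continuous_induced_dom.comp continuous_fst).mul (hc₁.comp continuous_snd)))
  · intro t
    simp [e₀ t]
  · intro t
    simp [e₁ t]
  · intro s t ht
    simp only [Set.mem_insert_iff, Set.mem_singleton_iff] at ht
    rcases ht with rfl | rfl
    · have hv : (1 - (s : ℝ)) * g₀ 0 + (s : ℝ) * g₁ 0 = g₀ 0 := by rw [← h0]; ring
      show Circle.exp ((1 - (s : ℝ)) * g₀ 0 + (s : ℝ) * g₁ 0) = _
      rw [hv]
      exact (e₀ 0).symm
    · have hv : (1 - (s : ℝ)) * g₀ 1 + (s : ℝ) * g₁ 1 = g₀ 1 := by rw [← h1]; ring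
      show Circle.exp ((1 - (s : ℝ)) * g₀ 1 + (s : ℝ) * g₁ 1) = _
      rw [hv]
      exact (e₀ 1).symm

/-! #### Path lifting along `Circle.exp` -/

lemma lift_step (f : Path (1 : Circle) 1) {δ : ℝ}
    (hδ : ∀ s t : I, dist s t < δ → dist (f s) (f t) < 2)
    {M : ℝ} (hMpos : 0 < M) (hMδ : 1 / M < δ) (k : ℕ)
    (g : I → ℝ) (hgc : Continuous g) (hg0 : g 0 = 0)
    (hg : ∀ t : I, (t : ℝ) ≤ k / M → f t = Circle.exp (g t)) :
    ∃ g' : I → ℝ, Continuous g' ∧ g' 0 = 0 ∧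
      ∀ t : I, (t : ℝ) ≤ (k + 1) / M → f t = Circle.exp (g' t) := by
  have hMinv : (0 : ℝ) < 1 / M := by positivity
  set a : ℝ := min ((k : ℝ) / M) 1 with ha_def
  have ha0 : (0 : ℝ) ≤ a := le_min (by positivity) zero_le_one
  have ha1 : a ≤ 1 := min_le_right _ _
  have hak : a ≤ (k : ℝ) / M := min_le_left _ _
  set b : ℝ := min (((k : ℝ) + 1) / M) 1 with hb_def
  have hb0 : (0 : ℝ) ≤ b := le_min (by positivity) zero_le_one
  have hb1 : b ≤ 1 := min_le_right _ _
  have hab : a ≤ b := min_le_min ((div_le_div_iff_of_pos_right hMpos).mpr (by linarith)) le_rfl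
  have hba : b ≤ a + 1 / M := by
    have h1 : ((k : ℝ) + 1) / M = (k : ℝ) / M + 1 / M := by ring
    calc b = min ((k : ℝ) / M + 1 / M) 1 := by rw [hb_def, h1]
      _ ≤ min ((k : ℝ) / M + 1 / M) (1 + 1 / M) := min_le_min le_rfl (by linarith)
      _ = a + 1 / M := by rw [ha_def, ← min_add_add_right]
  set t₀ : I := ⟨a, ha0, ha1⟩ with ht₀_def
  set c : I → I := fun t => ⟨max a (min (t : ℝ) b),
    le_trans ha0 (le_max_left _ _), max_le ha1 (le_trans (min_le_right _ _) hb1)⟩ with hc_def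
  have hcc : Continuous c :=
    Continuous.subtype_mk (continuous_const.max (continuous_subtype_val.min continuous_const)) _
  have hca : ∀ t, a ≤ (c t : ℝ) := fun t => le_max_left _ _
  have hcb : ∀ t, (c t : ℝ) ≤ b := fun t => max_le hab (min_le_right _ _)
  have hdist : ∀ t, dist (f (c t)) (f t₀) < 2 := by
    intro t
    apply hδ
    rw [Subtype.dist_eq, Real.dist_eq]
    have h2 : (0 : ℝ) ≤ (c t : ℝ) - a := by linarith [hca t]
    have h3 : (c t : ℝ) - a ≤ 1 / M := by linarith [hcb t]
    calc |(c t : ℝ) - (t₀ : ℝ)| = (c t : ℝ) - a := by rw [abs_of_nonneg h2]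
      _ ≤ 1 / M := h3
      _ < δ := hMδ
  set q : I → ℂ := fun t => ((f (c t) / f t₀ : Circle) : ℂ) with hq_def
  have hqc : Continuous q :=
    continuous_subtype_val.comp ((f.continuous.comp hcc).div' continuous_const)
  set h : I → ℝ := fun t => Complex.arg (q t) with hh_def
  have hhc : Continuous h := by
    rw [continuous_iff_continuousAt]
    intro t
    have hmem : q t ∈ Complex.slitPlane :=
      mem_slitPlane_of_ne_neg_one (div_ne_neg_one (hdist t))
    exact (Complex.continuousAt_arg hmem).comp hqc.continuousAt
  set mm : I → I := fun t => ⟨min (t : ℝ) a,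
    le_min t.2.1 ha0, le_trans (min_le_right _ _) ha1⟩ with hmm_def
  have hmmc : Continuous mm :=
    Continuous.subtype_mk (continuous_subtype_val.min continuous_const) _
  refine ⟨fun t => g (mm t) + h t, (hgc.comp hmmc).add hhc, ?_, ?_⟩
  · show g (mm 0) + h 0 = 0
    have hmm0 : mm 0 = 0 := Subtype.ext (by
      show min ((0 : I) : ℝ) a = ((0 : I) : ℝ)
      simp [ha0])
    have hc0 : c 0 = t₀ := Subtype.ext (by
      show max a (min ((0 : I) : ℝ) b) = a
      simp [hb0, ha0])
    have hq0 : q 0 = 1 := by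
      show ((f (c 0) / f t₀ : Circle) : ℂ) = 1
      rw [hc0, div_self']
      simp
    have hh0 : h 0 = 0 := by
      show Complex.arg (q 0) = 0
      rw [hq0, Complex.arg_one]
    rw [hmm0, hg0, hh0, add_zero]
  · intro t ht
    show f t = Circle.exp (g (mm t) + h t)
    rcases le_total ((t : ℝ)) a with hta | hat
    · have hmmt : mm t = t := Subtype.ext (min_eq_left hta)
      have hct : c t = t₀ := Subtype.ext (by
        show max a (min ((t : I) : ℝ) b) = a
        rw [min_eq_left (le_trans hta hab), max_eq_left hta])
      have hqt : q t = 1 := by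
        show ((f (c t) / f t₀ : Circle) : ℂ) = 1
        rw [hct, div_self']
        simp
      have hht : h t = 0 := by
        show Complex.arg (q t) = 0
        rw [hqt, Complex.arg_one]
      rw [hmmt, hht, add_zero]
      exact hg t (le_trans hta hak)
    · have hmmt : mm t = t₀ := Subtype.ext (min_eq_right hat)
      have hct : c t = t := Subtype.ext (by
        show max a (min ((t : I) : ℝ) b) = ((t : I) : ℝ)
        rw [min_eq_left (le_min ht t.2.2), max_eq_right hat])
      have hft₀ : f t₀ = Circle.exp (g t₀) := hg t₀ hak
      have hexph : Circle.exp (h t) = f (c t) / f t₀ := by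
        show Circle.exp (Complex.arg (q t)) = _
        exact exp_arg_coe _
      rw [hmmt, Circle.exp_add, ← hft₀, hexph, hct]
      exact (mul_div_cancel (f t₀) (f t)).symm

lemma lift_exists (f : Path (1 : Circle) 1) :
    ∃ g : I → ℝ, Continuous g ∧ g 0 = 0 ∧ ∀ t, f t = Circle.exp (g t) := by
  obtain ⟨δ, δpos, hδ⟩ := Metric.uniformContinuous_iff.mp
    (CompactSpace.uniformContinuous_of_continuous f.continuous) 2 two_pos
  obtain ⟨N, hN⟩ := exists_nat_one_div_lt δpos
  have hMpos : (0 : ℝ) < (N : ℝ) + 1 := by positivity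
  have key : ∀ k : ℕ, ∃ g : I → ℝ, Continuous g ∧ g 0 = 0 ∧
      ∀ t : I, (t : ℝ) ≤ k / ((N : ℝ) + 1) → f t = Circle.exp (g t) := by
    intro k
    induction k with
    | zero =>
      refine ⟨fun _ => 0, continuous_const, rfl, fun t ht => ?_⟩
      have ht0 : (t : ℝ) = 0 := le_antisymm (by simpa using ht) t.2.1
      have htt : t = 0 := Subtype.ext (by simpa using ht0)
      rw [htt]
      simp [f.source]
    | succ k ih =>
      obtain ⟨g, hgc, hg0, hg⟩ := ih
      have := lift_step f (fun s t hst => hδ hst) hMpos hN k g hgc hg0 hg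
      simpa using this
  obtain ⟨g, hgc, hg0, hg⟩ := key (N + 1)
  refine ⟨g, hgc, hg0, fun t => hg t ?_⟩
  have hdd : ((N : ℝ) + 1) / ((N : ℝ) + 1) = 1 := div_self (by positivity)
  calc (t : ℝ) ≤ 1 := t.2.2
    _ = ((N + 1 : ℕ) : ℝ) / ((N : ℝ) + 1) := by push_cast; rw [hdd]

/-! #### The standard loops of integer winding number -/

/-- The loop of winding number `n`. -/
def loopZ (n : ℤ) : Path (1 : Circle) 1 where
  toFun t := Circle.exp (2 * π * n * t)
  continuous_toFun := Circle.exp.continuous.comp (continuous_const.mul continuous_subtype_val)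
  source' := by simp
  target' := by
    simp only [Set.Icc.coe_one, mul_one]
    rw [Circle.exp_eq_one]
    exact ⟨n, by ring⟩

lemma loopZ_zero : loopZ 0 = Path.refl 1 := by
  ext t
  show (Circle.exp (2 * π * ((0 : ℤ) : ℝ) * t) : ℂ) = _
  norm_num

lemma loopZ_one : loopZ 1 = circleLoop := by
  ext t
  show (Circle.exp (2 * π * ((1 : ℤ) : ℝ) * t) : ℂ) = (Circle.exp (2 * π * t) : ℂ)
  norm_num

/-- Every loop in the circle is homotopic to a standard winding loop. -/
lemma loop_homotopic_loopZ (f : Path (1 : Circle) 1) : ∃ n : ℤ, f.Homotopic (loopZ n) := by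
  obtain ⟨g, hgc, hg0, hg⟩ := lift_exists f
  have h1 : Circle.exp (g 1) = 1 := by rw [← hg 1, f.target]
  rw [Circle.exp_eq_one] at h1
  obtain ⟨n, hn⟩ := h1
  refine ⟨n, homotopic_of_lifts f (loopZ n) g (fun t => 2 * π * n * t) hgc
    (continuous_const.mul continuous_subtype_val) ?_ ?_ hg (fun t => rfl)⟩
  · simp [hg0]
  · rw [hn]
    simp
    ring

lemma loopZ_trans (m n : ℤ) : (loopZ (m + n)).Homotopic ((loopZ m).trans (loopZ n)) := by
  apply homotopic_of_lifts (loopZ (m + n)) ((loopZ m).trans (loopZ n))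
    (fun t => 2 * π * ((m : ℝ) + n) * t)
    (fun t => 2 * π * ((m : ℝ) * min (2 * (t : ℝ)) 1 + (n : ℝ) * max (2 * (t : ℝ) - 1) 0))
  · exact continuous_const.mul continuous_subtype_val
  · apply continuous_const.mul
    apply Continuous.add
    · exact continuous_const.mul
        ((continuous_const.mul continuous_subtype_val).min continuous_const)
    · exact continuous_const.mul
        (((continuous_const.mul continuous_subtype_val).sub continuous_const).max continuous_const)
  · norm_num
  · norm_num
  · intro t
    show Circle.exp (2 * π * (((m + n : ℤ) : ℝ)) * t) = _
    push_cast
    rfl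
  · intro t
    rw [Path.trans_apply]
    split_ifs with hle
    · show Circle.exp _ = Circle.exp _
      congr 1
      rw [min_eq_left (by linarith), max_eq_right (by linarith)]
      show 2 * π * (m : ℝ) * (2 * (t : ℝ)) = _
      ring
    · push_neg at hle
      show Circle.exp _ = Circle.exp _
      rw [min_eq_right (by linarith), max_eq_left (by linarith)]
      have hsplit : 2 * π * ((m : ℝ) * 1 + (n : ℝ) * (2 * (t : ℝ) - 1)) =
          (m : ℝ) * (2 * π) + 2 * π * (n : ℝ) * (2 * (t : ℝ) - 1) := by ring
      rw [hsplit, Circle.exp_add]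
      have hm : Circle.exp ((m : ℝ) * (2 * π)) = 1 := Circle.exp_eq_one.mpr ⟨m, rfl⟩
      rw [hm, one_mul]

lemma loopZ_class (q : Path.Homotopic.Quotient (1 : Circle) 1) :
    ∃ n : ℤ, q = ⟦loopZ n⟧ := by
  induction q using Quotient.inductionOn with
  | h f =>
    obtain ⟨n, hn⟩ := loop_homotopic_loopZ f
    exact ⟨n, Quotient.sound hn⟩

/-! #### Generic group-theoretic lemmas about the fundamental group -/

variable {X : TopCat} {x : X}

lemma fromPath_mul (a b : Path.Homotopic.Quotient x x) :
    FundamentalGroup.fromPath (X := X) (Path.Homotopic.Quotient.trans a b) =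
      FundamentalGroup.fromPath b * FundamentalGroup.fromPath a := by
  rfl

lemma fromPath_refl :
    (FundamentalGroup.fromPath (X := X) ⟦Path.refl x⟧) = 1 := by
  rfl

lemma fromPath_zpow (L : ℤ → Path x x)
    (hadd : ∀ m n : ℤ, (⟦L (m + n)⟧ : Path.Homotopic.Quotient x x) =
      Path.Homotopic.Quotient.trans ⟦L m⟧ ⟦L n⟧)
    (hzero : (⟦L 0⟧ : Path.Homotopic.Quotient x x) = ⟦Path.refl x⟧) (n : ℤ) :
    FundamentalGroup.fromPath (X := X) ⟦L n⟧ =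
      (FundamentalGroup.fromPath (X := X) ⟦L 1⟧) ^ n := by
  set c := FundamentalGroup.fromPath (X := X) ⟦L 1⟧ with hc
  have key : ∀ m k : ℤ, FundamentalGroup.fromPath (X := X) ⟦L (m + k)⟧ =
      FundamentalGroup.fromPath (X := X) ⟦L k⟧ * FundamentalGroup.fromPath (X := X) ⟦L m⟧ := by
    intro m k
    rw [hadd, fromPath_mul ⟦L m⟧ ⟦L k⟧]
  have h0 : FundamentalGroup.fromPath (X := X) ⟦L 0⟧ = 1 := by rw [hzero, fromPath_refl]
  have hneg : FundamentalGroup.fromPath (X := X) ⟦L (-1)⟧ = c⁻¹ := by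
    have h := key (-1) 1
    rw [show (-1 + 1 : ℤ) = 0 by ring, h0] at h
    rw [eq_comm, inv_eq_iff_mul_eq_one]
    exact h.symm
  induction n using Int.induction_on with
  | zero => rw [h0, zpow_zero]
  | succ k ih =>
    have h := key (k : ℤ) 1
    rw [h, ih, ← hc, ← zpow_one_add]
    congr 1
    ring
  | pred k ih =>
    have h := key (-1) (-(k : ℤ))
    rw [show (-1 + -(k : ℤ) : ℤ) = -(k : ℤ) + -1 by ring] at h
    rw [show (-(k : ℤ) - 1 : ℤ) = -(k : ℤ) + -1 by ring, h, ih, hneg, zpow_add, zpow_neg_one]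

/-! #### The two families of torus loops -/

/-- The torus loop winding `m` times in the first coordinate. -/
def tLoopA (m : ℤ) : Path ((1 : Circle), (1 : Circle)) ((1 : Circle), (1 : Circle)) :=
  (loopZ m).prod (Path.refl 1)

/-- The torus loop winding `n` times in the second coordinate. -/
def tLoopB (n : ℤ) : Path ((1 : Circle), (1 : Circle)) ((1 : Circle), (1 : Circle)) :=
  (Path.refl 1).prod (loopZ n)

lemma comp_refl {Y : Type*} [TopologicalSpace Y] {y z : Y} (p : Path y z) :
    Path.Homotopic.Quotient.trans (⟦p⟧ : Path.Homotopic.Quotient y z) ⟦Path.refl z⟧ = ⟦p⟧ := by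
  show (⟦p.trans (Path.refl z)⟧ : Path.Homotopic.Quotient y z) = _
  exact Quotient.sound ⟨Path.Homotopy.transRefl p⟩

lemma refl_comp {Y : Type*} [TopologicalSpace Y] {y z : Y} (p : Path y z) :
    Path.Homotopic.Quotient.trans (⟦Path.refl y⟧ : Path.Homotopic.Quotient y y) ⟦p⟧ = ⟦p⟧ := by
  show (⟦(Path.refl y).trans p⟧ : Path.Homotopic.Quotient y z) = _
  exact Quotient.sound ⟨Path.Homotopy.reflTrans p⟩

lemma tLoopA_add (m n : ℤ) :
    (⟦tLoopA (m + n)⟧ : Path.Homotopic.Quotient ((1 : Circle), (1 : Circle)) (1, 1)) =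
      Path.Homotopic.Quotient.trans ⟦tLoopA m⟧ ⟦tLoopA n⟧ := by
  simp only [tLoopA]
  show Path.Homotopic.Quotient.mk _ = Path.Homotopic.Quotient.trans (Path.Homotopic.Quotient.mk _) (Path.Homotopic.Quotient.mk _)
  rw [← Path.Homotopic.prod_lift, ← Path.Homotopic.prod_lift (loopZ m),
    ← Path.Homotopic.prod_lift (loopZ n), Path.Homotopic.comp_prod_eq_prod_comp,
    (show Path.Homotopic.Quotient.trans (Path.Homotopic.Quotient.mk (Path.refl (1 : Circle))) (Path.Homotopic.Quotient.mk (Path.refl (1 : Circle))) = Path.Homotopic.Quotient.mk (Path.refl (1 : Circle)) from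
      Path.Homotopic.Quotient.eq.mpr ⟨Path.Homotopy.reflTrans (Path.refl (1 : Circle))⟩)]
  congr 1
  rw [← Path.Homotopic.Quotient.mk_trans]
  exact Path.Homotopic.Quotient.eq.mpr (loopZ_trans m n)

lemma tLoopB_add (m n : ℤ) :
    (⟦tLoopB (m + n)⟧ : Path.Homotopic.Quotient ((1 : Circle), (1 : Circle)) (1, 1)) =
      Path.Homotopic.Quotient.trans ⟦tLoopB m⟧ ⟦tLoopB n⟧ := by
  simp only [tLoopB]
  show Path.Homotopic.Quotient.mk _ = Path.Homotopic.Quotient.trans (Path.Homotopic.Quotient.mk _) (Path.Homotopic.Quotient.mk _)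
  rw [← Path.Homotopic.prod_lift, ← Path.Homotopic.prod_lift (Path.refl 1) (loopZ m),
    ← Path.Homotopic.prod_lift (Path.refl 1) (loopZ n), Path.Homotopic.comp_prod_eq_prod_comp,
    (show Path.Homotopic.Quotient.trans (Path.Homotopic.Quotient.mk (Path.refl (1 : Circle))) (Path.Homotopic.Quotient.mk (Path.refl (1 : Circle))) = Path.Homotopic.Quotient.mk (Path.refl (1 : Circle)) from
      Path.Homotopic.Quotient.eq.mpr ⟨Path.Homotopy.reflTrans (Path.refl (1 : Circle))⟩)]
  congr 1
  rw [← Path.Homotopic.Quotient.mk_trans]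
  exact Path.Homotopic.Quotient.eq.mpr (loopZ_trans m n)

lemma tLoopA_zero :
    (⟦tLoopA 0⟧ : Path.Homotopic.Quotient ((1 : Circle), (1 : Circle)) (1, 1)) =
      ⟦Path.refl (1, 1)⟧ := by
  show (⟦(loopZ 0).prod (Path.refl 1)⟧ : Path.Homotopic.Quotient _ _) = _
  rw [loopZ_zero]
  congr 1

lemma tLoopB_zero :
    (⟦tLoopB 0⟧ : Path.Homotopic.Quotient ((1 : Circle), (1 : Circle)) (1, 1)) =
      ⟦Path.refl (1, 1)⟧ := by
  show (⟦(Path.refl 1).prod (loopZ 0)⟧ : Path.Homotopic.Quotient _ _) = _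
  rw [loopZ_zero]
  congr 1

lemma tLoopA_one : tLoopA 1 = torusLoopA := by
  rw [tLoopA, torusLoopA, loopZ_one]

lemma tLoopB_one : tLoopB 1 = torusLoopB := by
  rw [tLoopB, torusLoopB, loopZ_one]

end TorusAux
end TorusAux

/-- Every element of the fundamental group of the torus is a product of integer powers of
the classes of the two canonical loops: `g = [β]^n * [α]^m`. -/
theorem torus_fundamentalGroup_generated_by_loops
    (g : FundamentalGroup (Circle × Circle) ((1 : Circle), (1 : Circle))) :
    ∃ n m : ℤ, g = torusClassB ^ n * torusClassA ^ m := by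
  classical
  set q : Path.Homotopic.Quotient ((1 : Circle), (1 : Circle)) (1, 1) :=
    FundamentalGroup.toPath (X := TopCat.of (Circle × Circle)) g with hq
  obtain ⟨m, hm⟩ := TorusAux.loopZ_class (Path.Homotopic.projLeft q)
  obtain ⟨n, hn⟩ := TorusAux.loopZ_class (Path.Homotopic.projRight q)
  refine ⟨n, m, ?_⟩
  have hqd : q = Path.Homotopic.Quotient.trans
      (⟦TorusAux.tLoopA m⟧ : Path.Homotopic.Quotient ((1 : Circle), (1 : Circle)) (1, 1))
      ⟦TorusAux.tLoopB n⟧ := by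
    calc q = Path.Homotopic.prod (Path.Homotopic.projLeft q) (Path.Homotopic.projRight q) :=
          (Path.Homotopic.prod_projLeft_projRight q).symm
      _ = Path.Homotopic.prod ⟦TorusAux.loopZ m⟧ ⟦TorusAux.loopZ n⟧ := by rw [hm, hn]
      _ = Path.Homotopic.prod
            (Path.Homotopic.Quotient.trans ⟦TorusAux.loopZ m⟧ ⟦Path.refl 1⟧)
            (Path.Homotopic.Quotient.trans ⟦Path.refl 1⟧ ⟦TorusAux.loopZ n⟧) := by
          rw [TorusAux.comp_refl, TorusAux.refl_comp]
      _ = Path.Homotopic.Quotient.trans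
            (Path.Homotopic.prod ⟦TorusAux.loopZ m⟧ ⟦Path.refl 1⟧)
            (Path.Homotopic.prod ⟦Path.refl 1⟧ ⟦TorusAux.loopZ n⟧) :=
          (Path.Homotopic.comp_prod_eq_prod_comp _ _ _ _).symm
      _ = Path.Homotopic.Quotient.trans ⟦TorusAux.tLoopA m⟧ ⟦TorusAux.tLoopB n⟧ := by
          rfl
  have hg : g = FundamentalGroup.fromPath (X := TopCat.of (Circle × Circle)) q :=
    rfl
  rw [hg, hqd, TorusAux.fromPath_mul (X := TopCat.of (Circle × Circle)) (x := ((1 : Circle), (1 : Circle))) (⟦TorusAux.tLoopA m⟧ : Path.Homotopic.Quotient _ _) ⟦TorusAux.tLoopB n⟧]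
  have hA := TorusAux.fromPath_zpow (X := TopCat.of (Circle × Circle)) TorusAux.tLoopA
    TorusAux.tLoopA_add TorusAux.tLoopA_zero m
  have hB := TorusAux.fromPath_zpow (X := TopCat.of (Circle × Circle)) TorusAux.tLoopB
    TorusAux.tLoopB_add TorusAux.tLoopB_zero n
  rw [hA, hB, TorusAux.tLoopA_one, TorusAux.tLoopB_one]
  rfl
end

section
/- The assignment n ↦ [loop]^n defines a group isomorphism from ℤ (under addition) onto π₁(S¹, 1); in particular the map is bijective and sends n + m to [loop]^n * [loop]^m. -/
attribute [local instance] Path.Homotopic.setoid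

open unitInterval

/-- `loopN k` : the loop `t ↦ exp (2πk t)`. -/
noncomputable def loopN (k : ℤ) : Path (1 : Circle) 1 where
  toFun t := Circle.exp (k * (2 * Real.pi) * t)
  continuous_toFun := Circle.exp.continuous.comp (continuous_const.mul continuous_subtype_val)
  source' := by simp
  target' := by simp [Circle.exp_int_mul_two_pi]

lemma loopN_apply (k : ℤ) (t : I) : loopN k t = Circle.exp (k * (2 * Real.pi) * t) := rfl

/-- A continuous function on `I` taking values in `2πℤ` is constant. -/
lemma const_of_int_valued {f : I → ℝ} (hf : Continuous f)
    (h : ∀ t, ∃ k : ℤ, f t = k * (2 * Real.pi)) (t : I) : f t = f 0 := by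
  set F : ℝ → ℝ := f ∘ Set.projIcc 0 1 zero_le_one with hFdef
  have hproj : ∀ s : I, Set.projIcc 0 1 zero_le_one (s : ℝ) = s := fun s =>
    Set.projIcc_val zero_le_one s
  have hFc : Continuous F := hf.comp continuous_projIcc
  obtain ⟨k0, hk0⟩ := h 0
  obtain ⟨kt, hkt⟩ := h t
  rw [hk0, hkt]
  by_contra hne
  have hkne : k0 ≠ kt := by
    intro hk; exact hne (by rw [hk])
  have hF0 : F 0 = k0 * (2 * Real.pi) := by
    have : Set.projIcc 0 1 zero_le_one (0:ℝ) = (0 : I) := hproj 0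
    simp only [hFdef, Function.comp_apply, this, hk0]
  have hFt : F (t : ℝ) = kt * (2 * Real.pi) := by
    simp only [hFdef, Function.comp_apply, hproj t, hkt]
  have hmem : ((min k0 kt : ℤ) : ℝ) * (2 * Real.pi) + Real.pi ∈ Set.uIcc (F 0) (F (t:ℝ)) := by
    rw [hF0, hFt, Set.mem_uIcc]
    have hpi := Real.pi_pos
    rcases le_or_gt k0 kt with hle | hlt
    · left
      have h1 : k0 < kt := lt_of_le_of_ne hle hkne
      have h2 : (k0 : ℝ) + 1 ≤ kt := by exact_mod_cast Int.add_one_le_iff.mpr h1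
      have hmin : (min k0 kt : ℤ) = k0 := min_eq_left hle
      rw [hmin]
      constructor <;> nlinarith
    · right
      have h2 : (kt : ℝ) + 1 ≤ k0 := by exact_mod_cast Int.add_one_le_iff.mpr hlt
      have hmin : (min k0 kt : ℤ) = kt := min_eq_right hlt.le
      rw [hmin]
      constructor <;> nlinarith
  obtain ⟨s, _, hs⟩ := intermediate_value_uIcc (f := F) (a := 0) (b := (t:ℝ)) hFc.continuousOn hmem
  obtain ⟨k, hk⟩ := h (Set.projIcc 0 1 zero_le_one s)
  set m : ℤ := min k0 kt with hm
  have hkm : (k : ℝ) * (2 * Real.pi) = (m : ℝ) * (2 * Real.pi) + Real.pi := by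
    rw [← hk]; exact hs
  have h2 : ((2 * k - 2 * m - 1 : ℤ) : ℝ) * Real.pi = 0 := by push_cast; linarith
  rcases mul_eq_zero.mp h2 with h3 | h3
  · have : (2 * k - 2 * m - 1 : ℤ) = 0 := by exact_mod_cast h3
    omega
  · exact Real.pi_ne_zero h3
open unitInterval

/-- Elementary: `|min x a - min x b| ≤ |a - b|`. -/
lemma abs_min_sub_min_le (x a b : ℝ) : |min x a - min x b| ≤ |a - b| := by
  have h : LipschitzWith 1 (fun y : ℝ => min x y) := by
    have := lipschitzWith_min.comp (LipschitzWith.prodMk_left x)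
    rwa [one_mul] at this
  have := h.dist_le_mul a b
  simpa [Real.dist_eq] using this

/-- min of a point of `I` with a real number in `[0,1]`, as element of `I`. -/
noncomputable def mn (t : I) (x : ℝ) : I := Set.projIcc 0 1 zero_le_one (min (t : ℝ) x)

lemma mn_coe (t : I) {x : ℝ} (h0 : 0 ≤ x) : ((mn t x : I) : ℝ) = min (t : ℝ) x := by
  have hmem : min (t : ℝ) x ∈ Set.Icc (0:ℝ) 1 :=
    ⟨le_min t.2.1 h0, min_le_of_left_le t.2.2⟩
  rw [mn, Set.projIcc_of_mem zero_le_one hmem]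

lemma mn_zero_right (t : I) : mn t 0 = 0 := by
  apply Subtype.ext
  rw [mn_coe t le_rfl, min_eq_right t.2.1]
  rfl

lemma mn_zero_left (x : ℝ) (h0 : 0 ≤ x) : mn 0 x = 0 := by
  apply Subtype.ext
  rw [mn_coe 0 h0]
  simp [min_eq_left h0]

lemma mn_one_right (t : I) : mn t 1 = t := by
  apply Subtype.ext
  rw [mn_coe t zero_le_one, min_eq_left t.2.2]

lemma continuous_mn {α : Type*} [TopologicalSpace α] {f : α → I} {g : α → ℝ}
    (hf : Continuous f) (hg : Continuous g) : Continuous fun a => mn (f a) (g a) :=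
  continuous_projIcc.comp ((continuous_subtype_val.comp hf).min hg)

/-- On the circle, if two points are at distance `< 2`, their ratio lies in the slit plane. -/
lemma ratio_mem_slitPlane {a b : Circle} (h : ‖(a:ℂ) - b‖ < 2) :
    ((a / b : Circle) : ℂ) ∈ Complex.slitPlane := by
  set z : ℂ := ((a / b : Circle) : ℂ) with hz
  have hzv : z = (a : ℂ) / b := by rw [hz]; push_cast; ring
  have habs : ‖z‖ = 1 := Circle.norm_coe _
  have hz1 : ‖z - 1‖ < 2 := by
    have hb : ‖(b:ℂ)‖ = 1 := Circle.norm_coe b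
    have hbne : (b:ℂ) ≠ 0 := by
      intro h0; rw [h0] at hb; simp at hb
    have : z - 1 = ((a:ℂ) - b) / b := by rw [hzv]; field_simp
    rw [this, norm_div, hb, div_one]
    exact h
  rw [Complex.mem_slitPlane_iff]
  by_contra hcon
  push_neg at hcon
  obtain ⟨hre, him⟩ := hcon
  have hzre : z = (z.re : ℂ) := Complex.ext rfl (by simp [him])
  have habs' : |z.re| = 1 := by
    rw [hzre] at habs; simpa using habs
  have hzm1 : z.re = -1 := by
    rcases abs_eq (by norm_num : (0:ℝ) ≤ 1) |>.mp habs' with h1 | h1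
    · linarith
    · exact h1
  have : z = -1 := by rw [hzre, hzm1]; norm_num
  rw [this] at hz1
  norm_num at hz1

lemma Circle.exp_sum (s : Finset ℕ) (f : ℕ → ℝ) :
    Circle.exp (∑ k ∈ s, f k) = ∏ k ∈ s, Circle.exp (f k) := by
  classical
  induction s using Finset.induction_on with
  | empty => simp
  | insert _ _ hx ih => rw [Finset.sum_insert hx, Finset.prod_insert hx, Circle.exp_add, ih]

/-- Lifting lemma: any continuous family `F : I × I → Circle` lifts to `ℝ`
relative to its value on the bottom edge. -/
lemma exists_lift_s14 (F : C(I × I, Circle)) :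
    ∃ G : I × I → ℝ, Continuous G ∧ (∀ s : I, G (s, 0) = 0) ∧
      ∀ p : I × I, (F p : Circle) = Circle.exp (G p) * F (p.1, 0) := by
  have hΦ : UniformContinuous fun p : I × I => ((F p : Circle) : ℂ) :=
    CompactSpace.uniformContinuous_of_continuous (continuous_subtype_val.comp F.continuous)
  obtain ⟨δ, hδpos, hδ⟩ := Metric.uniformContinuous_iff.mp hΦ 2 (by norm_num)
  obtain ⟨n, hn⟩ := exists_nat_one_div_lt hδpos
  set N : ℕ := n + 1 with hN
  have hNpos : (0:ℝ) < N := by positivity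
  have hNne : (N:ℝ) ≠ 0 := ne_of_gt hNpos
  set r : I × I → ℕ → Circle :=
    fun p k => F (p.1, mn p.2 ((k+1:ℕ)/N)) / F (p.1, mn p.2 ((k:ℕ)/N)) with hr
  have hdist : ∀ (p : I × I) (k : ℕ),
      dist ((F (p.1, mn p.2 ((k+1:ℕ)/N)) : Circle) : ℂ) ((F (p.1, mn p.2 ((k:ℕ)/N)) : Circle) : ℂ) < 2 := by
    intro p k
    apply hδ
    rw [Prod.dist_eq]
    apply max_lt
    · simpa using hδpos
    · have h1 : dist (mn p.2 ((k+1:ℕ)/N)) (mn p.2 ((k:ℕ)/N)) ≤ 1 / N := by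
        rw [Subtype.dist_eq, mn_coe _ (by positivity), mn_coe _ (by positivity), Real.dist_eq]
        have := abs_min_sub_min_le (p.2 : ℝ) ((k+1:ℕ)/N) ((k:ℕ)/N)
        have heq : |((k+1:ℕ):ℝ)/N - ((k:ℕ):ℝ)/N| = 1 / N := by
          rw [div_sub_div_same, show (((k+1:ℕ)):ℝ) - ((k:ℕ):ℝ) = 1 by push_cast; ring,
            abs_div, abs_one, abs_of_pos hNpos]
        rw [← heq]
        exact this
      calc dist (mn p.2 ((k+1:ℕ)/N)) (mn p.2 ((k:ℕ)/N)) ≤ 1 / N := h1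
        _ < δ := by
          have hcast : ((N:ℕ):ℝ) = (n:ℝ) + 1 := by rw [hN]; push_cast; ring
          rw [hcast]; exact hn
  have hslit : ∀ (p : I × I) (k : ℕ), ((r p k : Circle) : ℂ) ∈ Complex.slitPlane := by
    intro p k
    apply ratio_mem_slitPlane
    rw [← Complex.dist_eq]
    exact hdist p k
  set G : I × I → ℝ := fun p => ∑ k ∈ Finset.range N, Complex.arg (r p k) with hG
  have hcontr : ∀ k : ℕ, Continuous fun p : I × I => ((r p k : Circle) : ℂ) := by
    intro k
    have heq : (fun p : I × I => ((r p k : Circle) : ℂ)) =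
        fun p : I × I => ((F (p.1, mn p.2 ((k+1:ℕ)/N)) : Circle) : ℂ) /
          ((F (p.1, mn p.2 ((k:ℕ)/N)) : Circle) : ℂ) := by
      funext p
      rw [hr]
      exact Circle.coe_div _ _
    rw [heq]
    have hc1 : Continuous fun p : I × I => ((F (p.1, mn p.2 ((k+1:ℕ)/N)) : Circle) : ℂ) :=
      continuous_subtype_val.comp
        (F.continuous.comp (continuous_fst.prodMk (continuous_mn continuous_snd continuous_const)))
    have hc2 : Continuous fun p : I × I => ((F (p.1, mn p.2 ((k:ℕ)/N)) : Circle) : ℂ) :=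
      continuous_subtype_val.comp
        (F.continuous.comp (continuous_fst.prodMk (continuous_mn continuous_snd continuous_const)))
    exact hc1.div hc2 (fun p => Circle.coe_ne_zero _)
  refine ⟨G, ?_, ?_, ?_⟩
  · apply continuous_finset_sum
    intro k _
    rw [continuous_iff_continuousAt]
    intro p
    exact ContinuousAt.comp (f := fun p : I × I => ((r p k : Circle) : ℂ)) (x := p)
      (Complex.continuousAt_arg (hslit p k)) ((hcontr k).continuousAt)
  · intro s
    rw [hG]
    apply Finset.sum_eq_zero
    intro k _
    have h1 : mn (0:I) ((k+1:ℕ)/(N:ℝ)) = 0 := mn_zero_left _ (by positivity)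
    have h2 : mn (0:I) ((k:ℕ)/(N:ℝ)) = 0 := mn_zero_left _ (by positivity)
    have : r (s, 0) k = 1 := by
      rw [hr]
      simp only [h1, h2]
      exact div_self' _
    rw [this]
    simp
  · intro p
    have key : Circle.exp (G p) = F p / F (p.1, 0) := by
      rw [hG, Circle.exp_sum]
      have hterm : ∀ k ∈ Finset.range N, Circle.exp (Complex.arg (r p k)) = r p k :=
        fun k _ => Circle.exp_arg _
      rw [Finset.prod_congr rfl hterm]
      have htel := Finset.prod_range_div (G := Circle) (f := fun k => F (p.1, mn p.2 ((k:ℕ)/N))) N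
      simp only [hr]
      rw [htel]
      have hNN : ((N:ℕ):ℝ)/N = 1 := div_self hNne
      have h00 : ((0:ℕ):ℝ)/N = 0 := by simp
      rw [hNN, h00, mn_one_right, mn_zero_right]
    rw [key, div_eq_mul_inv, mul_assoc, inv_mul_cancel, mul_one]

lemma circle_exp_sub (a b : ℝ) : Circle.exp (a - b) = Circle.exp a * (Circle.exp b)⁻¹ := by
  have h := Circle.exp_add (a - b) b
  rw [sub_add_cancel] at h
  rw [h, mul_assoc, mul_inv_cancel, mul_one]

open Real in
/-- Straight-line homotopy: a loop with a lift ending at `2πk` is homotopic to `loopN k`. -/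
lemma homotopic_loopN (γ : Path (1 : Circle) 1) (g : I → ℝ) (hg : Continuous g)
    (h0 : g 0 = 0) (k : ℤ) (h1 : g 1 = k * (2 * π)) (hγ : ∀ t, γ t = Circle.exp (g t)) :
    γ.Homotopic (loopN k) := by
  refine ⟨{
    toFun := fun p => Circle.exp ((1 - (p.1 : ℝ)) * g p.2 + (p.1 : ℝ) * ((k : ℝ) * (2 * π) * (p.2 : ℝ)))
    continuous_toFun := Circle.exp.continuous.comp (Continuous.add
      ((continuous_const.sub (continuous_subtype_val.comp continuous_fst)).mul
        (hg.comp continuous_snd))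
      ((continuous_subtype_val.comp continuous_fst).mul
        (continuous_const.mul (continuous_subtype_val.comp continuous_snd))))
    map_zero_left := ?_
    map_one_left := ?_
    prop' := ?_ }⟩
  · intro x
    show Circle.exp ((1 - ((0:I) : ℝ)) * g x + ((0:I) : ℝ) * ((k : ℝ) * (2 * π) * (x : ℝ))) = γ x
    rw [hγ x]
    norm_num
  · intro x
    show Circle.exp ((1 - ((1:I) : ℝ)) * g x + ((1:I) : ℝ) * ((k : ℝ) * (2 * π) * (x : ℝ))) = loopN k x
    rw [loopN_apply]
    norm_num
  · intro t x hx
    rcases hx with hx | hx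
    · subst hx
      show Circle.exp ((1 - (t : ℝ)) * g 0 + (t : ℝ) * ((k : ℝ) * (2 * π) * ((0:I) : ℝ))) = γ 0
      rw [h0, γ.source]
      norm_num
    · rw [Set.mem_singleton_iff] at hx
      subst hx
      show Circle.exp ((1 - (t : ℝ)) * g 1 + (t : ℝ) * ((k : ℝ) * (2 * π) * ((1:I) : ℝ))) = γ 1
      rw [h1, γ.target]
      have harith : (1 - (t : ℝ)) * ((k:ℝ) * (2 * π)) + (t : ℝ) * ((k : ℝ) * (2 * π) * (((1:I)) : ℝ)) = (k:ℝ) * (2 * π) := by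
        norm_num; ring
      rw [harith, Circle.exp_int_mul_two_pi]

open Real in
lemma trans_homotopic (n m : ℤ) : ((loopN n).trans (loopN m)).Homotopic (loopN (n + m)) := by
  have hg : Continuous fun t : I => if (t : ℝ) ≤ 1/2 then (n:ℝ)*(2*π)*(2*(t:ℝ))
      else (n:ℝ)*(2*π) + (m:ℝ)*(2*π)*(2*(t:ℝ)-1) := by
    apply Continuous.if_le
    · exact continuous_const.mul (continuous_const.mul continuous_subtype_val)
    · exact continuous_const.add (continuous_const.mul
        ((continuous_const.mul continuous_subtype_val).sub continuous_const))
    · exact continuous_subtype_val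
    · exact continuous_const
    · intro t ht; rw [ht]; norm_num
  apply homotopic_loopN _ _ hg
  · norm_num
  · show (if ((1:I) : ℝ) ≤ 1/2 then (n:ℝ)*(2*π)*(2*((1:I):ℝ))
      else (n:ℝ)*(2*π) + (m:ℝ)*(2*π)*(2*((1:I):ℝ)-1)) = ((n + m : ℤ) : ℝ) * (2*π)
    have h1 : ((1:I) : ℝ) = 1 := rfl
    rw [h1, if_neg (by norm_num : ¬((1:ℝ) ≤ 1/2))]
    push_cast
    ring
  · intro t
    rw [Path.trans_apply]
    split_ifs with h
    · rw [loopN_apply]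
    · rw [loopN_apply]
      show Circle.exp ((m:ℝ)*(2*π)*(2*(t:ℝ)-1)) =
        Circle.exp ((n:ℝ)*(2*π) + (m:ℝ)*(2*π)*(2*(t:ℝ)-1))
      rw [Circle.exp_add, Circle.exp_int_mul_two_pi, one_mul]

open Real in
/-- Every loop in the circle based at 1 is homotopic to some `loopN k`. -/
lemma exists_homotopic_loopN (γ : Path (1 : Circle) 1) : ∃ k : ℤ, γ.Homotopic (loopN k) := by
  obtain ⟨G, hGc, hG0, hGl⟩ := exists_lift_s14 ⟨fun p : I × I => γ p.2, γ.continuous.comp continuous_snd⟩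
  set g : I → ℝ := fun t => G (0, t) with hgdef
  have hγ : ∀ t, γ t = Circle.exp (g t) := by
    intro t
    have h := hGl (0, t)
    simp only [ContinuousMap.coe_mk] at h
    rw [h, γ.source, mul_one]
  have hgc : Continuous g := hGc.comp (continuous_const.prodMk continuous_id)
  have h1 : Circle.exp (g 1) = 1 := by rw [← hγ 1, γ.target]
  obtain ⟨k, hk⟩ := Circle.exp_eq_one.mp h1
  exact ⟨k, homotopic_loopN γ g hgc (hG0 0) k hk hγ⟩

open Real in
lemma loopN_injective {n m : ℤ} (h : (loopN n).Homotopic (loopN m)) : n = m := by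
  obtain ⟨H⟩ := h
  obtain ⟨G, hGc, hG0, hGl⟩ := exists_lift_s14 H.toContinuousMap
  have hbase : ∀ s : I, H.toContinuousMap (s, 0) = 1 := by
    intro s
    exact (H.eq_fst s (show (0:I) ∈ ({0,1} : Set I) by norm_num)).trans (loopN n).source
  have hHG : ∀ p : I × I, H.toContinuousMap p = Circle.exp (G p) := by
    intro p
    rw [hGl p, hbase p.1, mul_one]
  -- the lift of the bottom edge (s = 0) ends at 2πn
  have hend : ∀ (a : I) (j : ℤ), (∀ t : I, (H.toContinuousMap (a, t) : Circle) =
      Circle.exp ((j:ℝ) * (2*π) * (t:ℝ))) → G (a, 1) = (j:ℝ) * (2*π) := by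
    intro a j hrow
    set d : I → ℝ := fun t => G (a, t) - (j:ℝ) * (2*π) * (t:ℝ) with hd
    have hdc : Continuous d :=
      (hGc.comp (continuous_const.prodMk continuous_id)).sub
        (continuous_const.mul continuous_subtype_val)
    have hdint : ∀ t, ∃ kk : ℤ, d t = kk * (2*π) := by
      intro t
      apply Circle.exp_eq_one.mp
      rw [hd]
      simp only
      rw [circle_exp_sub, ← hHG (a, t), hrow t, mul_inv_cancel]
    have hd1 : d 1 = d 0 := const_of_int_valued hdc hdint 1
    have hd0 : d 0 = 0 := by
      rw [hd]; simp only
      rw [hG0 a]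
      norm_num
    have : d 1 = 0 := by rw [hd1, hd0]
    rw [hd] at this
    simp only at this
    have h1 : ((1:I) : ℝ) = 1 := rfl
    rw [h1, mul_one] at this
    linarith
  have hrow0 : ∀ t : I, (H.toContinuousMap (0, t) : Circle) = Circle.exp ((n:ℝ) * (2*π) * (t:ℝ)) := by
    intro t
    exact H.map_zero_left t
  have hrow1 : ∀ t : I, (H.toContinuousMap (1, t) : Circle) = Circle.exp ((m:ℝ) * (2*π) * (t:ℝ)) := by
    intro t
    exact H.map_one_left t
  have hG01 : G (0, 1) = (n:ℝ) * (2*π) := hend 0 n hrow0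
  have hG11 : G (1, 1) = (m:ℝ) * (2*π) := hend 1 m hrow1
  -- the top edge is constant
  have htopint : ∀ s : I, ∃ kk : ℤ, G (s, 1) = kk * (2*π) := by
    intro s
    apply Circle.exp_eq_one.mp
    rw [← hHG (s, 1)]
    exact (H.eq_fst s (show (1:I) ∈ ({0,1} : Set I) by norm_num)).trans (loopN n).target
  have htop : G (1, 1) = G (0, 1) :=
    const_of_int_valued (hGc.comp (continuous_id.prodMk continuous_const)) htopint 1
  rw [hG01, hG11] at htop
  have hpi := Real.pi_pos
  have h2 : (2*π) ≠ 0 := by positivity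
  have : (m:ℝ) = (n:ℝ) := mul_right_cancel₀ h2 htop
  exact_mod_cast this.symm

/-- The homotopy class of `loopN n`. -/
noncomputable def loopNClass (n : ℤ) : FundamentalGroup Circle 1 :=
  FundamentalGroup.fromPath (X := TopCat.of Circle) ⟦loopN n⟧

lemma fgroup_ext {a b : FundamentalGroup Circle 1}
    (h : FundamentalGroup.toPath (X := TopCat.of Circle) a
       = FundamentalGroup.toPath (X := TopCat.of Circle) b) : a = b :=
  h

lemma toPath_loopNClass (n : ℤ) :
    FundamentalGroup.toPath (X := TopCat.of Circle) (loopNClass n) = ⟦loopN n⟧ := rfl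

lemma loopNClass_mul (n m : ℤ) : loopNClass n * loopNClass m = loopNClass (n + m) := by
  apply fgroup_ext
  have h1 : FundamentalGroup.toPath (X := TopCat.of Circle) (loopNClass n * loopNClass m)
      = Path.Homotopic.Quotient.trans (Path.Homotopic.Quotient.mk (loopN m)) (Path.Homotopic.Quotient.mk (loopN n)) := rfl
  rw [h1, ← Path.Homotopic.Quotient.mk_trans, toPath_loopNClass, add_comm n m]
  exact Quotient.sound (trans_homotopic m n)

lemma loopNClass_zero : loopNClass 0 = 1 := by
  apply fgroup_ext
  have h1 : loopN 0 = Path.refl 1 := by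
    ext t
    have h : (loopN 0) t = (Path.refl (1:Circle)) t := by
      show Circle.exp (((0:ℤ):ℝ) * (2 * Real.pi) * (t:ℝ)) = 1
      norm_num
    exact congrArg Subtype.val h
  rw [toPath_loopNClass, h1]
  rfl

lemma loopNClass_one : loopNClass 1 = circleLoopClass := by
  apply fgroup_ext
  have h1 : loopN 1 = circleLoop := by
    ext t
    have h : (loopN 1) t = circleLoop t := by
      show Circle.exp (((1:ℤ):ℝ) * (2 * Real.pi) * (t:ℝ)) = Circle.exp (2 * Real.pi * (t:ℝ))
      norm_num
    exact congrArg Subtype.val h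
  rw [toPath_loopNClass, h1]
  rfl

lemma zpow_eq_loopNClass (n : ℤ) : circleLoopClass ^ n = loopNClass n := by
  induction n using Int.induction_on with
  | zero => rw [zpow_zero, loopNClass_zero]
  | succ i ih =>
    rw [zpow_add_one, ih, ← loopNClass_one, loopNClass_mul]
  | pred i ih =>
    rw [zpow_sub_one, ih, ← loopNClass_one]
    have h2 : loopNClass (-(i:ℤ) - 1) * loopNClass 1 = loopNClass (-(i:ℤ)) := by
      rw [loopNClass_mul]; norm_num
    rw [← h2, mul_assoc, mul_inv_cancel, mul_one]

/-- The assignment `n ↦ [loop]^n` defines a group isomorphism from `ℤ` (under addition)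
onto the fundamental group of the circle: the map is bijective and sends `n + m` to
`[loop]^n * [loop]^m`. -/
theorem circle_fundamentalGroup_iso_via_loop_powers :
    Function.Bijective (fun n : ℤ => circleLoopClass ^ n) ∧
      ∀ n m : ℤ, circleLoopClass ^ (n + m) = circleLoopClass ^ n * circleLoopClass ^ m := by
  constructor
  · constructor
    · intro a b hab
      simp only [zpow_eq_loopNClass] at hab
      have h' : (⟦loopN a⟧ : Path.Homotopic.Quotient (1:Circle) 1) = ⟦loopN b⟧ :=
        congrArg (FundamentalGroup.toPath (X := TopCat.of Circle)) hab
      exact loopN_injective (Quotient.exact h')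
    · intro x
      obtain ⟨γ, hγ⟩ := Quotient.exists_rep (FundamentalGroup.toPath (X := TopCat.of Circle) x)
      obtain ⟨k, hk⟩ := exists_homotopic_loopN γ
      refine ⟨k, ?_⟩
      simp only [zpow_eq_loopNClass]
      apply fgroup_ext
      rw [toPath_loopNClass, ← hγ]
      exact (Quotient.sound hk).symm
  · intro n m
    exact zpow_add circleLoopClass n m
end

section
/- The class of the standard loop generates an infinite cyclic subgroup of the fundamental group of the circle: the homotopy class [loop] of the loop t ↦ exp(2πit) has infinite order in π₁(S¹, 1), i.e., [loop]^n = 1 implies n = 0 for n ∈ ℤ. -/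
attribute [local instance] Path.Homotopic.setoid

open Complex Real unitInterval

noncomputable section CW

namespace CW

lemma div_mem_slitPlane {z w : Circle} (h : dist z w < 2) :
    ((z : ℂ) / (w : ℂ)) ∈ slitPlane := by
  rw [mem_slitPlane_iff]
  by_contra hc
  push_neg at hc
  obtain ⟨hre, him⟩ := hc
  set u : ℂ := (z : ℂ) / (w : ℂ) with hu
  have habs : ‖u‖ = 1 := by
    simp [hu, map_div₀, Circle.norm_coe]
  rw [Complex.norm_def, Complex.normSq_apply, him] at habs
  have hsq : u.re * u.re + 0 * 0 = 1 := by
    have h0 : (0:ℝ) ≤ u.re * u.re + 0 * 0 := by nlinarith [mul_self_nonneg u.re]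
    nlinarith [Real.sq_sqrt h0, habs]
  have hre1 : u.re = -1 := by
    have hfac : (u.re + 1) * (u.re - 1) = 0 := by nlinarith
    rcases mul_eq_zero.mp hfac with h1 | h1
    · linarith
    · linarith
  have huneg : u = -1 := by
    apply Complex.ext <;> simp [hre1, him]
  have hzw : (z : ℂ) = -(w : ℂ) := by
    have hw : (w : ℂ) ≠ 0 := Circle.coe_ne_zero w
    rw [hu, div_eq_iff hw] at huneg
    linear_combination huneg
  have : dist z w = 2 := by
    show dist (z:ℂ) (w:ℂ) = 2
    rw [Complex.dist_eq, hzw]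
    have h2 : -(w:ℂ) - w = (-2) * w := by ring
    rw [h2, norm_mul]
    simp [Circle.norm_coe]
  linarith

/-- Strip-by-strip lifting of continuous maps `X × I → Circle` through `Circle.exp`. -/
lemma exists_lift {X : Type} [MetricSpace X] [CompactSpace X]
    (f : X × I → Circle) (hf : Continuous f) (g₀ : X → ℝ) (hg₀ : Continuous g₀)
    (h0 : ∀ x, Circle.exp (g₀ x) = f (x, 0)) :
    ∃ g : X × I → ℝ, Continuous g ∧ (∀ x, g (x, 0) = g₀ x) ∧ ∀ p, Circle.exp (g p) = f p := by
  have huc : UniformContinuous f := CompactSpace.uniformContinuous_of_continuous hf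
  obtain ⟨δ, hδ, hδ'⟩ := Metric.uniformContinuous_iff.mp huc 2 (by norm_num)
  obtain ⟨n, hn⟩ := exists_nat_one_div_lt hδ
  set N : ℕ := n + 1 with hN
  have hNpos : (0:ℝ) < N := by positivity
  have hn' : (1:ℝ) / N < δ := by exact_mod_cast hn
  have cmem : ∀ (k : ℕ) (t : I), min (t:ℝ) (k / N) ∈ unitInterval := fun k t =>
    ⟨le_min t.2.1 (by positivity), min_le_of_left_le t.2.2⟩
  set c : ℕ → I → I := fun k t => ⟨min (t:ℝ) (k / N), cmem k t⟩ with hc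
  have hccoe : ∀ (k : ℕ) (t : I), ((c k t : I) : ℝ) = min (t:ℝ) (k / N) := fun _ _ => rfl
  have hc_cont : ∀ k, Continuous fun t : I => c k t := fun k =>
    Continuous.subtype_mk (continuous_subtype_val.min continuous_const) _
  have hc0 : ∀ k, c k 0 = 0 := fun k => Subtype.ext (by
    simp only [hccoe, Set.Icc.coe_zero]
    exact min_eq_left (by positivity))
  have hczero : ∀ t, c 0 t = 0 := fun t => Subtype.ext (by
    simp only [hccoe, Set.Icc.coe_zero, Nat.cast_zero, zero_div]
    exact min_eq_right t.2.1)
  have hcN : ∀ t, c N t = t := fun t => Subtype.ext (by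
    rw [hccoe, div_self hNpos.ne']
    exact min_eq_left t.2.2)
  have hclose : ∀ (k : ℕ) (x : X) (t : I), dist (f (x, c (k+1) t)) (f (x, c k t)) < 2 := by
    intro k x t
    apply hδ'
    rw [Prod.dist_eq, dist_self]
    have h2 : dist (c (k+1) t) (c k t) ≤ 1 / N := by
      rw [Subtype.dist_eq, Real.dist_eq, hccoe, hccoe]
      set a := min (t:ℝ) (k / N) with ha
      set b := min (t:ℝ) ((k+1 : ℕ) / N) with hb
      have hab : a ≤ b := min_le_min le_rfl (by
        have : (k:ℝ) ≤ (k+1 : ℕ) := by push_cast; linarith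
        gcongr)
      have hba : b ≤ a + 1 / N := by
        rcases le_total (t:ℝ) ((k:ℝ) / N) with h | h
        · have : b ≤ (t:ℝ) := min_le_left _ _
          have ha' : a = (t:ℝ) := min_eq_left h
          rw [ha']
          have : (0:ℝ) ≤ 1 / N := by positivity
          linarith [min_le_left (t:ℝ) (((k:ℕ)+1 : ℕ) / N : ℝ)]
        · have ha' : a = (k:ℝ) / N := min_eq_right h
          have : b ≤ ((k+1 : ℕ) : ℝ) / N := min_le_right _ _
          rw [ha']
          push_cast at this ⊢
          rw [add_div] at this
          linarith
      rw [abs_le]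
      constructor <;> [linarith; linarith]
    have : max (0:ℝ) (dist (c (k+1) t) (c k t)) < δ := by
      rw [max_lt_iff]
      exact ⟨hδ, lt_of_le_of_lt h2 hn'⟩
    exact this
  have main : ∀ k : ℕ, ∃ g : X × I → ℝ, Continuous g ∧ (∀ x, g (x, 0) = g₀ x) ∧
      ∀ p : X × I, Circle.exp (g p) = f (p.1, c k p.2) := by
    intro k
    induction k with
    | zero =>
      refine ⟨fun p => g₀ p.1, hg₀.comp continuous_fst, fun x => rfl, fun p => ?_⟩
      rw [hczero p.2, h0 p.1]
    | succ k ih =>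
      obtain ⟨g, hg, hgz, hge⟩ := ih
      set u : X × I → Circle := fun p => f (p.1, c (k+1) p.2) / f (p.1, c k p.2) with huu
      have hu_ne : ∀ p, ((u p : ℂ)) ∈ slitPlane := by
        intro p
        rw [huu]
        simp only [Circle.coe_div]
        exact div_mem_slitPlane (hclose k p.1 p.2)
      have hu_cont : Continuous fun p => (u p : ℂ) := by
        simp only [huu, Circle.coe_div]
        apply Continuous.div
        · exact continuous_subtype_val.comp (hf.comp (continuous_fst.prodMk
            ((hc_cont (k+1)).comp continuous_snd)))
        · exact continuous_subtype_val.comp (hf.comp (continuous_fst.prodMk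
            ((hc_cont k).comp continuous_snd)))
        · exact fun p => Circle.coe_ne_zero _
      refine ⟨fun p => g p + arg (u p), ?_, ?_, ?_⟩
      · rw [continuous_iff_continuousAt]
        intro p
        have harg : ContinuousAt (Complex.arg ∘ fun p => (u p : ℂ)) p :=
          ContinuousAt.comp (continuousAt_arg (hu_ne p)) hu_cont.continuousAt
        exact hg.continuousAt.add harg
      · intro x
        have hux : u (x, 0) = 1 := by
          simp only [huu, hc0]
          exact div_self' _
        show g (x, 0) + arg ((u (x, 0) : ℂ)) = g₀ x
        rw [hux]
        simp [hgz x]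
      · intro p
        show Circle.exp (g p + arg ((u p : ℂ))) = f (p.1, c (k+1) p.2)
        rw [Circle.exp_add, hge p, Circle.exp_arg (u p), huu]
        exact mul_div_cancel _ _
  obtain ⟨g, hg, hgz, hge⟩ := main N
  refine ⟨g, hg, hgz, fun p => ?_⟩
  rw [hge p, hcN p.2]


lemma no_half (a b : ℤ) : (a:ℝ) * (2*π) + π ≠ (b:ℝ) * (2*π) := by
  intro h
  have h2 : ((2*a+1 : ℤ) : ℝ) * π = ((2*b : ℤ) : ℝ) * π := by push_cast; ring_nf; ring_nf at h; linarith
  have h3 := mul_right_cancel₀ Real.pi_ne_zero h2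
  have h4 : (2*a+1 : ℤ) = 2*b := by exact_mod_cast h3
  omega

lemma const_of_int {g : I → ℝ} (hg : Continuous g)
    (h : ∀ t, ∃ m : ℤ, g t = (m:ℝ) * (2*π)) (t : I) : g t = g 0 := by
  have hconn : IsPreconnected (Set.range g) := isPreconnected_range hg
  have hord := hconn.ordConnected
  obtain ⟨m, hm⟩ := h t
  obtain ⟨m0, hm0⟩ := h 0
  rcases lt_trichotomy (g 0) (g t) with hlt | heq | hgt
  · exfalso
    have hmm : (m0:ℝ) * (2*π) < (m:ℝ) * (2*π) := by rw [← hm0, ← hm]; exact hlt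
    have hmm' : m0 < m := by
      by_contra hcon
      push_neg at hcon
      have : (m:ℝ) ≤ m0 := by exact_mod_cast hcon
      nlinarith [Real.two_pi_pos]
    have hstep : g 0 + π ≤ g t := by
      rw [hm, hm0]
      have : (m0:ℝ) + 1 ≤ m := by exact_mod_cast hmm'
      nlinarith [Real.pi_pos]
    have hmem : g 0 + π ∈ Set.range g :=
      hord.out ⟨0, rfl⟩ ⟨t, rfl⟩ ⟨le_add_of_nonneg_right Real.pi_pos.le, hstep⟩
    obtain ⟨s, hs⟩ := hmem
    obtain ⟨k, hk⟩ := h s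
    rw [hs, hm0] at hk
    exact no_half m0 k hk
  · exact heq.symm
  · exfalso
    have hmm : (m:ℝ) * (2*π) < (m0:ℝ) * (2*π) := by rw [← hm0, ← hm]; exact hgt
    have hmm' : m < m0 := by
      by_contra hcon
      push_neg at hcon
      have : (m0:ℝ) ≤ m := by exact_mod_cast hcon
      nlinarith [Real.two_pi_pos]
    have hstep : g t + π ≤ g 0 := by
      rw [hm, hm0]
      have : (m:ℝ) + 1 ≤ m0 := by exact_mod_cast hmm'
      nlinarith [Real.pi_pos]
    have hmem : g t + π ∈ Set.range g :=
      hord.out ⟨t, rfl⟩ ⟨0, rfl⟩ ⟨le_add_of_nonneg_right Real.pi_pos.le, hstep⟩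
    obtain ⟨s, hs⟩ := hmem
    obtain ⟨k, hk⟩ := h s
    rw [hs, hm] at hk
    exact no_half m k hk

lemma lift_unique {g₁ g₂ : I → ℝ} (h₁ : Continuous g₁) (h₂ : Continuous g₂)
    (he : ∀ t, Circle.exp (g₁ t) = Circle.exp (g₂ t)) (h0 : g₁ 0 = g₂ 0) (t : I) :
    g₁ t = g₂ t := by
  have key := const_of_int (g := fun s => g₁ s - g₂ s) (h₁.sub h₂) (fun s => by
    obtain ⟨m, hm⟩ := Circle.exp_eq_exp.mp (he s)
    exact ⟨m, by show g₁ s - g₂ s = (m:ℝ) * (2*π); rw [hm]; ring⟩) t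
  have h00 : g₁ 0 - g₂ 0 = 0 := by rw [h0]; ring
  rw [h00] at key
  linarith

lemma path_lift (γ : Path (1 : Circle) 1) :
    ∃ g : I → ℝ, Continuous g ∧ g 0 = 0 ∧ ∀ t, Circle.exp (g t) = γ t := by
  obtain ⟨g, hg, hg0, hge⟩ := exists_lift (X := I) (fun p => γ p.2)
    (γ.continuous.comp continuous_snd) (fun _ => 0) continuous_const
    (fun x => by rw [Circle.exp_zero]; exact γ.source.symm)
  exact ⟨fun t => g (0, t), hg.comp (continuous_const.prodMk continuous_id),
    hg0 0, fun t => hge (0, t)⟩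

/-- A chosen lift of a loop, starting at `0`. -/
def pathLift (γ : Path (1 : Circle) 1) : I → ℝ := (path_lift γ).choose

lemma pathLift_spec (γ : Path (1 : Circle) 1) :
    Continuous (pathLift γ) ∧ pathLift γ 0 = 0 ∧ ∀ t, Circle.exp (pathLift γ t) = γ t :=
  (path_lift γ).choose_spec

/-- The winding degree of a loop, as a real number. -/
def pathDeg (γ : Path (1 : Circle) 1) : ℝ := pathLift γ 1

lemma pathDeg_eq (γ : Path (1 : Circle) 1) {g : I → ℝ} (hg : Continuous g) (h0 : g 0 = 0)
    (he : ∀ t, Circle.exp (g t) = γ t) : pathDeg γ = g 1 := by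
  obtain ⟨hc, hz, hsp⟩ := pathLift_spec γ
  exact lift_unique hc hg (fun t => by rw [hsp t, he t]) (by rw [hz, h0]) 1

lemma pathDeg_congr {γ₀ γ₁ : Path (1 : Circle) 1} (h : γ₀.Homotopic γ₁) :
    pathDeg γ₀ = pathDeg γ₁ := by
  obtain ⟨H⟩ := h
  obtain ⟨G, hG, hG0, hGe⟩ := exists_lift (X := I) (fun p => H p)
    H.continuous (fun _ => 0) continuous_const
    (fun s => by
      show Circle.exp 0 = H (s, 0)
      rw [Circle.exp_zero]
      have h1 : H (s, 0) = γ₀ 0 := H.eq_fst s (Or.inl rfl)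
      rw [h1, γ₀.source])
  have hends : ∀ s : I, ∃ m : ℤ, G (s, 1) = (m:ℝ) * (2*π) := by
    intro s
    have h1 : Circle.exp (G (s, 1)) = 1 := by
      rw [hGe (s, 1)]
      show H (s, 1) = 1
      have h2 : H (s, 1) = γ₀ 1 := H.eq_fst s (Or.inr rfl)
      rw [h2, γ₀.target]
    obtain ⟨m, hm⟩ := Circle.exp_eq_one.mp h1
    exact ⟨m, hm⟩
  have hu : Continuous fun s : I => G (s, 1) :=
    hG.comp (continuous_id.prodMk continuous_const)
  have hconst := const_of_int hu hends 1
  have hd0 : pathDeg γ₀ = G (0, 1) := by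
    apply pathDeg_eq γ₀ (g := fun t => G (0, t))
      (hG.comp (continuous_const.prodMk continuous_id)) (hG0 0)
    intro t
    rw [hGe (0, t)]
    show H (0, t) = γ₀ t
    exact H.apply_zero t
  have hd1 : pathDeg γ₁ = G (1, 1) := by
    apply pathDeg_eq γ₁ (g := fun t => G (1, t))
      (hG.comp (continuous_const.prodMk continuous_id)) (hG0 1)
    intro t
    rw [hGe (1, t)]
    show H (1, t) = γ₁ t
    exact H.apply_one t
  rw [hd0, hd1, hconst]

lemma pathDeg_trans (p q : Path (1 : Circle) 1) :
    pathDeg (p.trans q) = pathDeg p + pathDeg q := by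
  obtain ⟨hpc, hp0, hpe⟩ := pathLift_spec p
  obtain ⟨hqc, hq0, hqe⟩ := pathLift_spec q
  set gp := pathLift p with hgp
  set gq := pathLift q with hgq
  set gpE : ℝ → ℝ := Set.IccExtend zero_le_one gp with hgpE
  set gqE : ℝ → ℝ := Set.IccExtend zero_le_one gq with hgqE
  have hgpEc : Continuous gpE := hpc.Icc_extend'
  have hgqEc : Continuous gqE := hqc.Icc_extend'
  set g : I → ℝ := fun t => if (t:ℝ) ≤ 1/2 then gpE (2*t) else gp 1 + gqE (2*t-1) with hgdef
  have hgc : Continuous g := by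
    apply Continuous.if_le
    · exact hgpEc.comp (continuous_const.mul continuous_subtype_val)
    · exact continuous_const.add (hgqEc.comp
        ((continuous_const.mul continuous_subtype_val).sub continuous_const))
    · exact continuous_subtype_val
    · exact continuous_const
    · intro t ht
      rw [ht]
      have e1 : (2:ℝ) * (1/2) = 1 := by norm_num
      rw [e1]
      rw [show (1:ℝ) - 1 = 0 from by norm_num]
      rw [hgpE, hgqE, Set.IccExtend_right, Set.IccExtend_left]
      have h1 : gq ⟨0, Set.left_mem_Icc.2 zero_le_one⟩ = 0 := hq0
      rw [h1]
      have h2 : gp ⟨1, Set.right_mem_Icc.2 zero_le_one⟩ = gp 1 := rfl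
      rw [h2]
      ring
  have hg0 : g 0 = 0 := by
    rw [hgdef]
    have hcond : ((0:I):ℝ) ≤ 1/2 := by rw [Set.Icc.coe_zero]; norm_num
    simp only [if_pos hcond]
    have e1 : (2:ℝ) * ((0:I):ℝ) = 0 := by rw [Set.Icc.coe_zero]; ring
    rw [e1, hgpE, Set.IccExtend_left]
    exact hp0
  have hge : ∀ t, Circle.exp (g t) = (p.trans q) t := by
    intro t
    rw [Path.trans_apply]
    by_cases h : (t:ℝ) ≤ 1/2
    · rw [dif_pos h, hgdef]
      simp only [if_pos h]
      have hmem : (2*(t:ℝ)) ∈ Set.Icc (0:ℝ) 1 := ⟨mul_nonneg (by norm_num) t.2.1, by linarith⟩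
      rw [hgpE, Set.IccExtend_of_mem _ _ hmem]
      exact hpe _
    · rw [dif_neg h, hgdef]
      simp only [if_neg h]
      push_neg at h
      have hmem : (2*(t:ℝ)-1) ∈ Set.Icc (0:ℝ) 1 := ⟨by linarith, by linarith [t.2.2]⟩
      rw [Circle.exp_add, hgqE, Set.IccExtend_of_mem _ _ hmem, hpe 1, hqe _, p.target, one_mul]
  have hend : pathDeg (p.trans q) = g 1 := pathDeg_eq _ hgc hg0 hge
  rw [hend, hgdef]
  have hcond : ¬ ((1:I):ℝ) ≤ 1/2 := by rw [Set.Icc.coe_one]; norm_num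
  simp only [if_neg hcond]
  have e1 : (2:ℝ) * ((1:I):ℝ) - 1 = 1 := by rw [Set.Icc.coe_one]; ring
  rw [e1, hgqE, Set.IccExtend_right]
  rfl

/-- Winding degree on homotopy classes of loops. -/
def deg : Path.Homotopic.Quotient (1 : Circle) 1 → ℝ :=
  Quotient.lift pathDeg fun _ _ h => pathDeg_congr h

lemma deg_mk (γ : Path (1 : Circle) 1) : deg ⟦γ⟧ = pathDeg γ := rfl

lemma deg_comp (P Q : Path.Homotopic.Quotient (1 : Circle) 1) :
    deg (P.trans Q) = deg P + deg Q := by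
  induction P using Quotient.inductionOn with | _ p =>
  induction Q using Quotient.inductionOn with | _ q =>
  show deg ⟦p.trans q⟧ = deg ⟦p⟧ + deg ⟦q⟧
  exact pathDeg_trans p q

/-- The winding degree as a homomorphism on the fundamental group of the circle. -/
def degHom : FundamentalGroup Circle 1 →* Multiplicative ℝ where
  toFun x := Multiplicative.ofAdd (deg (FundamentalGroup.toPath (X := TopCat.of Circle) x))
  map_one' := by
    have h1 : deg ⟦Path.refl (1:Circle)⟧ = 0 := by
      rw [deg_mk]
      rw [pathDeg_eq (Path.refl 1) (g := fun _ => 0) continuous_const rfl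
        (fun t => by rw [Circle.exp_zero]; rfl)]
    show Multiplicative.ofAdd (deg ⟦Path.refl (1:Circle)⟧) = 1
    rw [h1]
    rfl
  map_mul' a b := by
    show Multiplicative.ofAdd (deg ((FundamentalGroup.toPath (X := TopCat.of Circle) b).trans
      (FundamentalGroup.toPath (X := TopCat.of Circle) a))) = _
    rw [deg_comp]
    rw [← ofAdd_add]
    rw [add_comm]

lemma degHom_circleLoopClass : degHom circleLoopClass = Multiplicative.ofAdd (2*π) := by
  show Multiplicative.ofAdd (deg ⟦circleLoop⟧) = Multiplicative.ofAdd (2*π)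
  congr 1
  rw [deg_mk]
  rw [pathDeg_eq circleLoop (g := fun t => 2*π*(t:ℝ))
    (continuous_const.mul continuous_subtype_val) (by norm_num)
    (fun t => rfl)]
  norm_num

end CW
end CW


/-- The class of the standard loop has infinite order in the fundamental group of the
circle: `[loop]^n = 1` implies `n = 0` for `n : ℤ`. -/
theorem circleLoopClass_infinite_order (n : ℤ) (h : circleLoopClass ^ n = 1) : n = 0 := by
  have h1 := congrArg CW.degHom h
  rw [map_zpow, map_one, CW.degHom_circleLoopClass] at h1
  have h2 : (n • (2*π) : ℝ) = 0 := by
    rw [← ofAdd_zsmul] at h1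
    have h3 := congrArg Multiplicative.toAdd h1
    simpa using h3
  rw [zsmul_eq_mul] at h2
  rcases mul_eq_zero.mp h2 with h3 | h3
  · exact_mod_cast h3
  · exact absurd h3 (by positivity)
end

section
/- The fundamental group of the real projective plane is nontrivial: there exists an element g ∈ π₁(ℝP², x₀) with g ≠ 1; such an element is given by the class of the loop obtained as the image in ℝP² of a path in the unit sphere S² joining a point to its antipode. -/
open scoped LinearAlgebra.Projectivization

/-- The real projective plane: the space of lines through the origin in `ℝ³`. -/
abbrev RealProjectivePlane : Type :=
  Projectivization ℝ (EuclideanSpace ℝ (Fin 3))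

/-- The quotient topology on the real projective plane, induced from the subspace of
nonzero vectors of `ℝ³`. -/
noncomputable instance : TopologicalSpace RealProjectivePlane :=
  inferInstanceAs (TopologicalSpace
    (Quotient (projectivizationSetoid ℝ (EuclideanSpace ℝ (Fin 3)))))

attribute [local instance] Path.Homotopic.setoid

/-- The natural quotient map from nonzero vectors of `ℝ³` onto the real projective plane
is continuous. -/
lemma continuous_projectivization_mk' :
    Continuous (Projectivization.mk' ℝ :
      {u : EuclideanSpace ℝ (Fin 3) // u ≠ 0} → RealProjectivePlane) :=
  continuous_quotient_mk'

namespace RP2Aux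

open Topology
open scoped RealInnerProductSpace unitInterval

noncomputable section

abbrev V : Type := EuclideanSpace ℝ (Fin 3)

abbrev N : Type := {u : V // u ≠ 0}

abbrev pr : N → RealProjectivePlane := Projectivization.mk' ℝ

lemma pr_isQuotientMap : IsQuotientMap pr := isQuotientMap_quotient_mk'

lemma pr_surjective : Function.Surjective pr := fun x =>
  ⟨⟨x.rep, x.rep_nonzero⟩, by
    show Projectivization.mk' ℝ _ = x
    rw [Projectivization.mk'_eq_mk]; exact x.mk_rep⟩

lemma pr_isOpenMap : IsOpenMap pr := by
  intro U hU
  rw [← pr_isQuotientMap.isOpen_preimage]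
  have hset : pr ⁻¹' (pr '' U) =
      ⋃ c : ℝˣ, (fun v : N => (⟨(c : ℝ) • (v : V),
        smul_ne_zero c.ne_zero v.2⟩ : N)) ⁻¹' U := by
    ext v
    simp only [Set.mem_preimage, Set.mem_image, Set.mem_iUnion]
    constructor
    · rintro ⟨u, hu, huv⟩
      rw [show pr u = Projectivization.mk ℝ (u : V) u.2 from
          Projectivization.mk'_eq_mk ℝ u,
        show pr v = Projectivization.mk ℝ (v : V) v.2 from
          Projectivization.mk'_eq_mk ℝ v,
        Projectivization.mk_eq_mk_iff] at huv
      obtain ⟨c, hc⟩ := huv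
      rw [Units.smul_def] at hc
      refine ⟨c, ?_⟩
      have : (⟨(c : ℝ) • (v : V), smul_ne_zero c.ne_zero v.2⟩ : N) = u :=
        Subtype.ext hc
      rwa [this]
    · rintro ⟨c, hc⟩
      refine ⟨_, hc, ?_⟩
      rw [show pr _ = Projectivization.mk ℝ ((c : ℝ) • (v : V))
            (smul_ne_zero c.ne_zero v.2) from Projectivization.mk'_eq_mk ℝ _,
        show pr v = Projectivization.mk ℝ (v : V) v.2 from
          Projectivization.mk'_eq_mk ℝ v,
        Projectivization.mk_eq_mk_iff]
      exact ⟨c, by rw [Units.smul_def]⟩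
  rw [hset]
  exact isOpen_iUnion fun c =>
    hU.preimage ((continuous_subtype_val.const_smul (c : ℝ)).subtype_mk _)

lemma pr_oqm : IsOpenQuotientMap pr :=
  ⟨pr_surjective, continuous_projectivization_mk', pr_isOpenMap⟩

/-- An auxiliary "angle" function on pairs of nonzero vectors; it descends to the
projective plane. -/
def pre (u w : V) : ℝ := ⟪u, w⟫ ^ 2 / (‖u‖ ^ 2 * ‖w‖ ^ 2)

lemma pre_smul_left {c : ℝ} (hc : c ≠ 0) (u w : V) : pre (c • u) w = pre u w := by
  unfold pre
  rw [real_inner_smul_left, norm_smul, Real.norm_eq_abs, mul_pow, mul_pow, sq_abs,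
    mul_assoc, mul_div_mul_left _ _ (pow_ne_zero 2 hc)]

lemma pre_comm (u w : V) : pre u w = pre w u := by
  unfold pre
  rw [real_inner_comm u w]
  ring

lemma pre_smul_right {c : ℝ} (hc : c ≠ 0) (u w : V) : pre u (c • w) = pre u w := by
  rw [pre_comm, pre_smul_left hc, pre_comm]

/-- The "angle" function on the projective plane. -/
def pairP (x y : RealProjectivePlane) : ℝ := pre x.rep y.rep

lemma pairP_mk {u w : V} (hu : u ≠ 0) (hw : w ≠ 0) :
    pairP (Projectivization.mk ℝ u hu) (Projectivization.mk ℝ w hw) = pre u w := by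
  obtain ⟨c, hc⟩ := (Projectivization.mk_eq_mk_iff ℝ _ _
    (Projectivization.rep_nonzero _) hu).mp ((Projectivization.mk ℝ u hu).mk_rep)
  obtain ⟨d, hd⟩ := (Projectivization.mk_eq_mk_iff ℝ _ _
    (Projectivization.rep_nonzero _) hw).mp ((Projectivization.mk ℝ w hw).mk_rep)
  rw [Units.smul_def] at hc hd
  unfold pairP
  rw [← hc, ← hd, pre_smul_left c.ne_zero, pre_smul_right d.ne_zero]

lemma pairP_self (x : RealProjectivePlane) : pairP x x = 1 := by
  have h : ‖x.rep‖ ≠ 0 := norm_ne_zero_iff.mpr x.rep_nonzero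
  unfold pairP pre
  rw [real_inner_self_eq_norm_sq,
    show (‖x.rep‖ ^ 2) ^ 2 = ‖x.rep‖ ^ 2 * ‖x.rep‖ ^ 2 by ring]
  exact div_self (mul_ne_zero (pow_ne_zero 2 h) (pow_ne_zero 2 h))

lemma continuous_pairP : Continuous fun z : RealProjectivePlane × RealProjectivePlane =>
    pairP z.1 z.2 := by
  rw [← (pr_oqm.prodMap pr_oqm).continuous_comp_iff]
  have hfun : ((fun z : RealProjectivePlane × RealProjectivePlane => pairP z.1 z.2) ∘
      Prod.map pr pr) = fun q : N × N => pre (q.1 : V) (q.2 : V) := by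
    funext q
    show pairP (pr q.1) (pr q.2) = _
    rw [show pr q.1 = Projectivization.mk ℝ (q.1 : V) q.1.2 from
        Projectivization.mk'_eq_mk ℝ _,
      show pr q.2 = Projectivization.mk ℝ (q.2 : V) q.2.2 from
        Projectivization.mk'_eq_mk ℝ _, pairP_mk]
  rw [hfun]
  have h1 : Continuous fun q : N × N => (q.1 : V) := continuous_subtype_val.comp continuous_fst
  have h2 : Continuous fun q : N × N => (q.2 : V) := continuous_subtype_val.comp continuous_snd
  refine Continuous.div ?_ ?_ ?_
  · exact (continuous_inner.comp (h1.prodMk h2)).pow 2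
  · exact ((h1.norm.pow 2).mul (h2.norm.pow 2))
  · intro q
    exact mul_ne_zero (pow_ne_zero 2 (norm_ne_zero_iff.mpr q.1.2))
      (pow_ne_zero 2 (norm_ne_zero_iff.mpr q.2.2))

/-- Transport a vector `u` to a unit vector representing the projective point `x`,
on the side of `u`. -/
def transport (u : V) (x : RealProjectivePlane) : V :=
  Projectivization.lift
    (fun w : N => (⟪(w : V), u⟫ / |⟪(w : V), u⟫| / ‖(w : V)‖) • (w : V))
    (by
      rintro ⟨a, ha⟩ ⟨b, hb⟩ t (rfl : a = t • b)
      have ht : t ≠ 0 := by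
        rintro rfl
        simp at ha
      simp only
      rw [real_inner_smul_left, norm_smul, Real.norm_eq_abs, smul_smul]
      congr 1
      calc (t * ⟪b, u⟫) / |t * ⟪b, u⟫| / (|t| * ‖b‖) * t
          = ⟪b, u⟫ / |⟪b, u⟫| / ‖b‖ * (t / |t| * (t / |t|)) := by
            rw [abs_mul]; ring
        _ = ⟪b, u⟫ / |⟪b, u⟫| / ‖b‖ := by
            rw [div_mul_div_comm, abs_mul_abs_self, div_self (mul_ne_zero ht ht),
              mul_one])
    x

lemma transport_mk (u : V) {w : V} (hw : w ≠ 0) :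
    transport u (Projectivization.mk ℝ w hw) =
      (⟪w, u⟫ / |⟪w, u⟫| / ‖w‖) • w :=
  Projectivization.lift_mk _ _ w hw

lemma transport_rep (u : V) (x : RealProjectivePlane) :
    transport u x = (⟪x.rep, u⟫ / |⟪x.rep, u⟫| / ‖x.rep‖) • x.rep := by
  conv_lhs => rw [← x.mk_rep]
  exact transport_mk u x.rep_nonzero

lemma norm_transport {u : V} {x : RealProjectivePlane} (h : ⟪x.rep, u⟫ ≠ 0) :
    ‖transport u x‖ = 1 := by
  have hr : ‖x.rep‖ ≠ 0 := norm_ne_zero_iff.mpr x.rep_nonzero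
  have ha : |⟪x.rep, u⟫| ≠ 0 := abs_ne_zero.mpr h
  rw [transport_rep, norm_smul, Real.norm_eq_abs, abs_div, abs_div, abs_abs,
    abs_norm, div_self ha]
  field_simp

lemma transport_ne_zero {u : V} {x : RealProjectivePlane} (h : ⟪x.rep, u⟫ ≠ 0) :
    transport u x ≠ 0 := by
  intro h0
  have := norm_transport h
  rw [h0] at this
  simp at this

lemma mk_transport {u : V} {x : RealProjectivePlane} (h : ⟪x.rep, u⟫ ≠ 0)
    (h' : transport u x ≠ 0) : Projectivization.mk ℝ (transport u x) h' = x := by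
  have hr : ‖x.rep‖ ≠ 0 := norm_ne_zero_iff.mpr x.rep_nonzero
  have ha : |⟪x.rep, u⟫| ≠ 0 := abs_ne_zero.mpr h
  have h2 : Projectivization.mk ℝ (transport u x) h' =
      Projectivization.mk ℝ x.rep x.rep_nonzero := by
    rw [Projectivization.mk_eq_mk_iff']
    exact ⟨_, (transport_rep u x).symm⟩
  rw [h2, x.mk_rep]

lemma transport_self {u : V} (hu : ‖u‖ = 1) {x : RealProjectivePlane}
    (hu0 : u ≠ 0) (hx : x = Projectivization.mk ℝ u hu0) : transport u x = u := by
  rw [hx, transport_mk, real_inner_self_eq_norm_sq, hu]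
  norm_num

lemma continuousAt_transport {u₀ : V} {x₀ : RealProjectivePlane}
    (h : ⟪x₀.rep, u₀⟫ ≠ 0) :
    ContinuousAt (fun q : V × RealProjectivePlane => transport q.1 q.2) (u₀, x₀) := by
  have hoq : IsOpenQuotientMap (Prod.map (id : V → V) pr) :=
    IsOpenQuotientMap.id.prodMap pr_oqm
  have hpt : (Prod.map (id : V → V) pr) (u₀, ⟨x₀.rep, x₀.rep_nonzero⟩) = (u₀, x₀) := by
    simp only [Prod.map, id]
    rw [show pr ⟨x₀.rep, x₀.rep_nonzero⟩ =
      Projectivization.mk ℝ x₀.rep x₀.rep_nonzero from Projectivization.mk'_eq_mk ℝ _,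
      x₀.mk_rep]
  rw [← hpt, ← hoq.continuousAt_comp_iff]
  have hfun : ((fun q : V × RealProjectivePlane => transport q.1 q.2) ∘
      Prod.map (id : V → V) pr) =
      fun q : V × N => (⟪(q.2 : V), q.1⟫ / |⟪(q.2 : V), q.1⟫| / ‖(q.2 : V)‖) •
        (q.2 : V) := by
    funext q
    show transport q.1 (pr q.2) = _
    rw [show pr q.2 = Projectivization.mk ℝ (q.2 : V) q.2.2 from
      Projectivization.mk'_eq_mk ℝ _, transport_mk]
  rw [hfun]
  have h1 : Continuous fun q : V × N => (q.2 : V) :=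
    continuous_subtype_val.comp continuous_snd
  have hin : Continuous fun q : V × N => ⟪(q.2 : V), q.1⟫ :=
    continuous_inner.comp (h1.prodMk continuous_fst)
  have hA : ⟪((⟨x₀.rep, x₀.rep_nonzero⟩ : N) : V), u₀⟫ ≠ 0 := h
  refine ContinuousAt.smul (f := fun q : V × N => ⟪(q.2 : V), q.1⟫ / |⟪(q.2 : V), q.1⟫| / ‖(q.2 : V)‖) ?_ h1.continuousAt
  refine ContinuousAt.div ?_ ?_ ?_
  · exact ContinuousAt.div hin.continuousAt hin.continuousAt.abs (abs_ne_zero.mpr hA)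
  · exact h1.norm.continuousAt
  · exact norm_ne_zero_iff.mpr x₀.rep_nonzero

lemma inner_rep_ne_zero {x y : RealProjectivePlane} {u : V} (hu : u ≠ 0)
    (hmk : Projectivization.mk ℝ u hu = x) (hp : pairP x y ≠ 0) :
    ⟪y.rep, u⟫ ≠ 0 := by
  have h1 : pairP x y = pre u y.rep := by
    conv_lhs => rw [← y.mk_rep]
    rw [← hmk, pairP_mk]
  rw [h1] at hp
  intro h0
  rw [real_inner_comm] at h0
  unfold pre at hp
  rw [h0] at hp
  simp at hp

attribute [irreducible] pre pairP transport

set_option maxHeartbeats 1000000 in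
/-- The key lemma: there is no homotopy rel endpoints from the image of a unit-sphere
path joining antipodes to the constant loop. -/
lemma no_homotopy (x₀ : RealProjectivePlane) (v : V) (hv : v ≠ 0) (hv1 : ‖v‖ = 1)
    (hx : x₀ = Projectivization.mk ℝ v hv)
    (p : I → V) (hpc : Continuous p) (hpn : ∀ t, ‖p t‖ = 1)
    (hp0 : p 0 = v) (hp1 : p 1 = -v)
    (H : C(I × I, RealProjectivePlane))
    (H0 : ∀ t (h : p t ≠ 0), H (0, t) = Projectivization.mk ℝ (p t) h)
    (H1 : ∀ t : I, H (1, t) = x₀)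
    (Hs0 : ∀ s : I, H (s, 0) = x₀) (Hs1 : ∀ s : I, H (s, 1) = x₀) : False := by
  have hvneg : (-v : V) ≠ 0 := neg_ne_zero.mpr hv
  have hxneg : x₀ = Projectivization.mk ℝ (-v) hvneg := by
    rw [hx, Projectivization.mk_eq_mk_iff']
    exact ⟨-1, by simp⟩
  -- uniform continuity: find δ
  have hD : Continuous fun zw : (I × I) × (I × I) => pairP (H zw.1) (H zw.2) :=
    continuous_pairP.comp ((H.continuous.comp continuous_fst).prodMk
      (H.continuous.comp continuous_snd))
  obtain ⟨δ, hδ, hd⟩ := Metric.uniformContinuous_iff.mp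
    (CompactSpace.uniformContinuous_of_continuous hD) 1 one_pos
  have hpair : ∀ z w : I × I, dist z w < δ → pairP (H z) (H w) ≠ 0 := by
    intro z w hzw
    have h1 : dist ((z, w) : (I × I) × (I × I)) ((z, z) : (I × I) × (I × I)) < δ := by
      rw [Prod.dist_eq]
      refine max_lt ?_ ?_
      · simpa using hδ
      · simpa [dist_comm] using hzw
    have h2 := hd h1
    rw [pairP_self] at h2
    intro h0
    rw [h0, Real.dist_eq] at h2
    norm_num at h2
  -- choose n
  obtain ⟨m, hm⟩ := exists_nat_one_div_lt hδ
  set n : ℕ := m + 1 with hn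
  have hnpos : (0 : ℝ) < n := by positivity
  have hn1 : (1 : ℝ) / n < δ := by exact_mod_cast hm
  -- the grid points
  have cmem : ∀ k : ℕ, k ≤ n → (k : ℝ) / n ∈ I := by
    intro k hk
    constructor
    · positivity
    · rw [div_le_one hnpos]
      exact_mod_cast hk
  set c : ∀ k : ℕ, k ≤ n → I := fun k hk => ⟨(k : ℝ) / n, cmem k hk⟩ with hc
  -- the inductive construction of rows
  have main : ∀ k (hk : k ≤ n), ∃ R : I → V, Continuous R ∧ (∀ t, ‖R t‖ = 1) ∧
      (∀ t (h : R t ≠ 0), Projectivization.mk ℝ (R t) h = H (c k hk, t)) ∧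
      R 0 = v ∧ R 1 = -v := by
    intro k
    induction k with
    | zero =>
      intro hk
      refine ⟨p, hpc, hpn, fun t h => ?_, hp0, hp1⟩
      have hc0 : c 0 hk = 0 := by
        apply Subtype.ext
        show ((0 : ℕ) : ℝ) / n = 0
        simp
      rw [hc0, H0 t h]
    | succ k ih =>
      intro hk
      have hk' : k ≤ n := Nat.le_of_succ_le hk
      obtain ⟨R, hRc, hRn, hRmk, hR0, hR1⟩ := ih hk'
      have hRne : ∀ t, R t ≠ 0 := fun t =>
        norm_ne_zero_iff.mp (by rw [hRn t]; exact one_ne_zero)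
      -- adjacent rows are non-perpendicular
      have hclose : ∀ t : I, dist ((c k hk', t) : I × I) ((c (k+1) hk, t) : I × I) < δ := by
        intro t
        rw [Prod.dist_eq]
        have h1 : dist (c k hk') (c (k+1) hk) = 1 / (n : ℝ) := by
          rw [Subtype.dist_eq]
          show dist ((k : ℝ) / n) (((k + 1 : ℕ) : ℝ) / n) = 1 / (n : ℝ)
          have h2 : (k : ℝ) / n - ((k + 1 : ℕ) : ℝ) / n = -(1 / n) := by
            push_cast
            ring
          rw [Real.dist_eq, h2, abs_neg, abs_of_nonneg (by positivity)]
        simp only [dist_self]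
        rw [max_comm, max_eq_right dist_nonneg, h1]
        exact hn1
      have hinner : ∀ t : I, ⟪(H (c (k+1) hk, t)).rep, R t⟫ ≠ 0 := by
        intro t
        exact inner_rep_ne_zero (hRne t) (hRmk t (hRne t)) (hpair _ _ (hclose t))
      refine ⟨fun t => transport (R t) (H (c (k+1) hk, t)), ?_, ?_, ?_, ?_, ?_⟩
      · rw [continuous_iff_continuousAt]
        intro t
        have hg : ContinuousAt (fun t : I => (R t, H (c (k+1) hk, t))) t :=
          hRc.continuousAt.prodMk ((H.continuous.comp
            (Continuous.prodMk continuous_const continuous_id)).continuousAt)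
        exact ContinuousAt.comp (f := fun t : I => (R t, H (c (k+1) hk, t)))
          (continuousAt_transport (hinner t)) hg
      · intro t
        exact norm_transport (hinner t)
      · intro t h
        exact mk_transport (hinner t) h
      · show transport (R 0) (H (c (k+1) hk, (0 : I))) = v
        rw [hR0]
        exact transport_self hv1 hv (by rw [Hs0, hx])
      · show transport (R 1) (H (c (k+1) hk, (1 : I))) = -v
        rw [hR1]
        exact transport_self (by rw [norm_neg, hv1]) hvneg (by rw [Hs1, hxneg])
  -- the final row
  obtain ⟨R, hRc, hRn, hRmk, hR0, hR1⟩ := main n le_rfl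
  have hRne : ∀ t, R t ≠ 0 := fun t =>
    norm_ne_zero_iff.mp (by rw [hRn t]; exact one_ne_zero)
  have hcn : c n le_rfl = 1 := by
    apply Subtype.ext
    show ((n : ℕ) : ℝ) / n = 1
    field_simp
  have hRx : ∀ t, Projectivization.mk ℝ (R t) (hRne t) = x₀ := by
    intro t
    rw [hRmk t (hRne t), hcn, H1]
  -- the sign function
  set f : I → ℝ := fun t => ⟪R t, v⟫ with hf
  have hfc : Continuous f := continuous_inner.comp (hRc.prodMk continuous_const)
  have hfone : ∀ t, |f t| = 1 := by
    intro t
    obtain ⟨a, ha⟩ := (Projectivization.mk_eq_mk_iff' ℝ _ _ (hRne t) hv).mp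
      (by rw [hRx t, hx])
    have hnorm : |a| = 1 := by
      have := hRn t
      rw [← ha, norm_smul, Real.norm_eq_abs, hv1, mul_one] at this
      exact this
    rw [hf]
    simp only
    rw [← ha, real_inner_smul_left, real_inner_self_eq_norm_sq, hv1]
    rw [abs_mul]
    simp [hnorm]
  have hf0 : f 0 = 1 := by
    rw [hf]
    simp only
    rw [hR0, real_inner_self_eq_norm_sq, hv1]
    norm_num
  have hf1 : f 1 = -1 := by
    rw [hf]
    simp only
    rw [hR1, inner_neg_left, real_inner_self_eq_norm_sq, hv1]
    norm_num
  have h0mem : (0 : ℝ) ∈ Set.Icc (f 1) (f 0) := by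
    rw [hf0, hf1]
    norm_num
  obtain ⟨t, ht⟩ := intermediate_value_univ (1 : I) (0 : I) hfc h0mem
  have := hfone t
  rw [ht] at this
  norm_num at this

end

end RP2Aux

/-- The fundamental group of the real projective plane is nontrivial: there is an element
`g ≠ 1`, given by the class of the loop obtained as the image in `ℝP²` of a path in the
unit sphere `S²` joining a point to its antipode. -/
theorem realProjectivePlane_fundamentalGroup_nontrivial (x₀ : RealProjectivePlane) :
    ∃ g : FundamentalGroup RealProjectivePlane x₀, g ≠ 1 ∧
      ∃ (v : EuclideanSpace ℝ (Fin 3)) (hv : v ≠ 0)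
        (p : Path (⟨v, hv⟩ : {u : EuclideanSpace ℝ (Fin 3) // u ≠ 0})
          ⟨-v, neg_ne_zero.mpr hv⟩),
        (∀ t, ‖(p t : EuclideanSpace ℝ (Fin 3))‖ = 1) ∧
        ∃ (hx : x₀ = Projectivization.mk' ℝ ⟨v, hv⟩)
          (hy : x₀ = Projectivization.mk' ℝ ⟨-v, neg_ne_zero.mpr hv⟩),
          g = FundamentalGroup.fromPath (X := TopCat.of RealProjectivePlane)
            ⟦(p.map continuous_projectivization_mk').cast hx hy⟧ := by
  classical
  obtain ⟨v, hv, hv1, hxv⟩ : ∃ (v : EuclideanSpace ℝ (Fin 3)) (hv : v ≠ 0),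
      ‖v‖ = 1 ∧ x₀ = Projectivization.mk ℝ v hv := by
    have hr : x₀.rep ≠ 0 := x₀.rep_nonzero
    have hrn : ‖x₀.rep‖ ≠ 0 := norm_ne_zero_iff.mpr hr
    refine ⟨‖x₀.rep‖⁻¹ • x₀.rep, smul_ne_zero (inv_ne_zero hrn) hr, ?_, ?_⟩
    · rw [norm_smul, Real.norm_eq_abs, abs_inv, abs_norm]
      field_simp
    · conv_lhs => rw [← x₀.mk_rep]
      rw [Projectivization.mk_eq_mk_iff']
      exact ⟨‖x₀.rep‖, by rw [smul_smul]; field_simp; exact one_smul _ _⟩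
  have hvneg : (-v : EuclideanSpace ℝ (Fin 3)) ≠ 0 := neg_ne_zero.mpr hv
  have hxvneg : x₀ = Projectivization.mk ℝ (-v) hvneg := by
    rw [hxv, Projectivization.mk_eq_mk_iff']
    exact ⟨-1, by simp⟩
  -- find a unit vector orthogonal to `v`
  obtain ⟨w, hw1, hvw⟩ : ∃ w : EuclideanSpace ℝ (Fin 3),
      ‖w‖ = 1 ∧ inner (𝕜 := ℝ) v w = 0 := by
    haveI : Fact (Module.finrank ℝ (EuclideanSpace ℝ (Fin 3)) = 2 + 1) :=
      ⟨by simp [finrank_euclideanSpace_fin]⟩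
    have hfin : Module.finrank ℝ ((ℝ ∙ v)ᗮ) = 2 := Submodule.finrank_orthogonal_span_singleton hv
    obtain ⟨w', hw'⟩ := Module.finrank_pos_iff_exists_ne_zero.mp
      (by rw [hfin]; norm_num : 0 < Module.finrank ℝ ((ℝ ∙ v)ᗮ))
    have hw0 : (w' : EuclideanSpace ℝ (Fin 3)) ≠ 0 := fun h => hw' (Subtype.ext h)
    have hw0n : ‖(w' : EuclideanSpace ℝ (Fin 3))‖ ≠ 0 := norm_ne_zero_iff.mpr hw0
    refine ⟨‖(w' : EuclideanSpace ℝ (Fin 3))‖⁻¹ • w', ?_, ?_⟩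
    · rw [norm_smul, Real.norm_eq_abs, abs_inv, abs_norm]
      field_simp
    · have h1 : inner (𝕜 := ℝ) v (w' : EuclideanSpace ℝ (Fin 3)) = 0 :=
        Submodule.mem_orthogonal_singleton_iff_inner_right.mp w'.2
      rw [inner_smul_right, h1, mul_zero]
  -- the path in the unit sphere
  set p0 : unitInterval → EuclideanSpace ℝ (Fin 3) :=
    fun t => Real.cos (Real.pi * t) • v + Real.sin (Real.pi * t) • w with hp0def
  have hp0c : Continuous p0 := by
    apply Continuous.add
    · exact (Real.continuous_cos.comp
        (continuous_const.mul continuous_subtype_val)).smul continuous_const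
    · exact (Real.continuous_sin.comp
        (continuous_const.mul continuous_subtype_val)).smul continuous_const
  have hp0n : ∀ t, ‖p0 t‖ = 1 := by
    intro t
    have hsq : ‖p0 t‖ ^ 2 = 1 := by
      simp only [hp0def]
      rw [norm_add_sq_real, real_inner_smul_left, real_inner_smul_right, hvw,
        norm_smul, norm_smul, Real.norm_eq_abs, Real.norm_eq_abs, hv1, hw1,
        mul_pow, mul_pow, sq_abs, sq_abs]
      simp only [mul_zero, add_zero, one_pow, mul_one]
      exact Real.cos_sq_add_sin_sq _
    have h2 : (‖p0 t‖ - 1) * (‖p0 t‖ + 1) = 0 := by nlinarith [hsq]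
    rcases mul_eq_zero.mp h2 with h3 | h3
    · linarith
    · nlinarith [norm_nonneg (p0 t)]
  have hp00 : p0 0 = v := by
    have hco : ((0 : unitInterval) : ℝ) = 0 := rfl
    simp only [hp0def, hco, mul_zero, Real.cos_zero, Real.sin_zero, one_smul,
      zero_smul, add_zero]
  have hp01 : p0 1 = -v := by
    have hco : ((1 : unitInterval) : ℝ) = 1 := rfl
    simp only [hp0def, hco, mul_one, Real.cos_pi, Real.sin_pi, neg_smul, one_smul,
      zero_smul, add_zero]
  have hp0ne : ∀ t, p0 t ≠ 0 := fun t =>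
    norm_ne_zero_iff.mp (by rw [hp0n t]; exact one_ne_zero)
  set p : Path (⟨v, hv⟩ : {u : EuclideanSpace ℝ (Fin 3) // u ≠ 0})
      ⟨-v, neg_ne_zero.mpr hv⟩ :=
    { toFun := fun t => ⟨p0 t, hp0ne t⟩
      continuous_toFun := hp0c.subtype_mk _
      source' := Subtype.ext hp00
      target' := Subtype.ext hp01 } with hpdef
  have hpn : ∀ t, ‖(p t : EuclideanSpace ℝ (Fin 3))‖ = 1 := fun t => hp0n t
  have hx : x₀ = Projectivization.mk' ℝ
      (⟨v, hv⟩ : {u : EuclideanSpace ℝ (Fin 3) // u ≠ 0}) := by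
    rw [Projectivization.mk'_eq_mk]
    exact hxv
  have hy : x₀ = Projectivization.mk' ℝ
      (⟨-v, neg_ne_zero.mpr hv⟩ : {u : EuclideanSpace ℝ (Fin 3) // u ≠ 0}) := by
    rw [Projectivization.mk'_eq_mk]
    exact hxvneg
  set loop : Path x₀ x₀ := (p.map continuous_projectivization_mk').cast hx hy
    with hloopdef
  refine ⟨FundamentalGroup.fromPath (X := TopCat.of RealProjectivePlane) ⟦loop⟧,
    ?_, v, hv, p, hpn, hx, hy, rfl⟩
  intro hone
  have h2 : (⟦loop⟧ : Path.Homotopic.Quotient x₀ x₀) = ⟦Path.refl x₀⟧ := by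
    have h3 := congrArg (fun a => a) hone
    exact h3
  have h4 : loop.Homotopic (Path.refl x₀) := Quotient.exact h2
  obtain ⟨F⟩ := h4
  have hloopt : ∀ t, loop t = Projectivization.mk ℝ (p0 t) (hp0ne t) := by
    intro t
    rw [hloopdef]
    show ((p.map continuous_projectivization_mk').cast hx hy) t = _
    rw [Path.cast_coe]
    show Projectivization.mk' ℝ (p t) = _
    rw [Projectivization.mk'_eq_mk]
    rfl
  refine RP2Aux.no_homotopy x₀ v hv hv1 hxv p0 hp0c hp0n hp00 hp01
    F.toHomotopy.toContinuousMap ?_ ?_ ?_ ?_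
  · intro t h
    show F (0, t) = _
    rw [F.apply_zero]
    exact hloopt t
  · intro t
    show F (1, t) = x₀
    rw [F.apply_one]
    rfl
  · intro s
    show F (s, 0) = x₀
    rw [F.eq_fst s (by norm_num : (0 : unitInterval) ∈ ({0, 1} : Set unitInterval))]
    show loop 0 = x₀
    exact loop.source
  · intro s
    show F (s, 1) = x₀
    rw [F.eq_fst s (by norm_num : (1 : unitInterval) ∈ ({0, 1} : Set unitInterval))]
    show loop 1 = x₀
    exact loop.target
end
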